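/- arXiv:2105.04432 — 11 statements merged into one kernel-verified Lean document; each statement's English description precedes it below -/
import Mathlib

section
/- Let a, δ, ℓ be positive integers with ℓ ≤ δ, and let K be any field. Then for every integer r with 0 ≤ r ≤ δ − ℓ, the ℓ×ℓ submatrix P^a_{δ,ℓ}([r : r+ℓ−1], [0 : ℓ−1]) of P^a_{δ,ℓ}, formed by ℓ consecutive rows, is invertible over K. -/
set_option linter.unusedVariables false

/-- The recursively defined 0/1 matrix `P^a_{u,v}`, given entrywise:
`Pmat a u v i j` is the `(i,j)` entry of `P^a_{u,v}`. -/
def Pmat (a u v i j : ℕ) : ℕ :=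
  if h1 : 0 < u ∧ u + a < v then
    if j < u then (if i = j then 1 else 0)
    else if j < u + a then 0
    else Pmat a u (v - u - a) i (j - u - a)
  else if h2 : 0 < v ∧ v < u then
    if i < v then (if i = j then 1 else 0)
    else Pmat a (u - v) v (i - v) j
  else
    if i = j ∧ j < u then 1 else 0
termination_by u + v
decreasing_by
  · omega
  · omega

lemma pmat_entry (a ℓ : ℕ) (hℓ : 0 < ℓ) :
    ∀ δ x j, x < δ → j ≤ x % ℓ → Pmat a δ ℓ x j = if x % ℓ = j then 1 else 0 := by
  intro δ
  induction δ using Nat.strong_induction_on with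
  | _ δ IH =>
    intro x j hx hj
    rw [Pmat]
    rcases lt_trichotomy ℓ δ with h | h | h
    · rw [dif_neg (by omega), dif_pos ⟨hℓ, h⟩]
      by_cases hxl : x < ℓ
      · rw [if_pos hxl, Nat.mod_eq_of_lt hxl]
      · rw [if_neg hxl]
        have hmod : (x - ℓ) % ℓ = x % ℓ := (Nat.mod_eq_sub_mod (by omega)).symm
        rw [IH (δ - ℓ) (by omega) (x - ℓ) j (by omega) (by omega), hmod]
    · subst h
      have hxm : x % ℓ = x := Nat.mod_eq_of_lt hx
      rw [dif_neg (by omega), dif_neg (by omega), hxm]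
      by_cases hxy : x = j
      · rw [if_pos ⟨hxy, by omega⟩, if_pos hxy]
      · rw [if_neg (by tauto), if_neg hxy]
    · -- δ < ℓ, so x < δ < ℓ, x % ℓ = x, j ≤ x < δ
      have hxm : x % ℓ = x := Nat.mod_eq_of_lt (by omega)
      rw [hxm] at hj ⊢
      by_cases h1 : 0 < δ ∧ δ + a < ℓ
      · rw [dif_pos h1, if_pos (by omega)]
      · rw [dif_neg h1, dif_neg (by omega)]
        by_cases hxy : x = j
        · rw [if_pos ⟨hxy, by omega⟩, if_pos hxy]
        · rw [if_neg (by tauto), if_neg hxy]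

lemma key_mod (ℓ r i : ℕ) (hℓ : 0 < ℓ) (hi : i < ℓ) :
    (r + (i + (ℓ - r % ℓ) % ℓ) % ℓ) % ℓ = i := by
  obtain ⟨q, hq⟩ : ℓ ∣ (r + (ℓ - r % ℓ) % ℓ) := by
    have h1 := Nat.div_add_mod r ℓ
    have h2 : r % ℓ < ℓ := Nat.mod_lt _ hℓ
    rcases Nat.eq_zero_or_pos (r % ℓ) with h | h
    · rw [h, Nat.sub_zero, Nat.mod_self]
      exact ⟨r / ℓ, by omega⟩
    · have h3 : (ℓ - r % ℓ) % ℓ = ℓ - r % ℓ := Nat.mod_eq_of_lt (by omega)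
      refine ⟨r / ℓ + 1, ?_⟩
      have h4 : ℓ * (r / ℓ + 1) = ℓ * (r / ℓ) + ℓ := by ring
      omega
  rw [Nat.add_mod_mod]
  have h5 : r + (i + (ℓ - r % ℓ) % ℓ) = ℓ * q + i := by omega
  rw [h5, Nat.mul_add_mod, Nat.mod_eq_of_lt hi]

/-- for positive integers `a, δ, ℓ` with `ℓ ≤ δ` and any field `K`,
for every `r` with `0 ≤ r ≤ δ - ℓ`, the `ℓ×ℓ` submatrix of `P^a_{δ,ℓ}` formed by the
`ℓ` consecutive rows `[r : r+ℓ-1]` (and all `ℓ` columns) is invertible over `K`. -/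
theorem pmat_consecutive_rows_invertible {K : Type*} [Field K]
    (a δ ℓ : ℕ) (ha : 0 < a) (hδ : 0 < δ) (hℓ : 0 < ℓ) (hℓδ : ℓ ≤ δ)
    (r : ℕ) (hr : r + ℓ ≤ δ) :
    (Matrix.of fun i j : Fin ℓ => ((Pmat a δ ℓ (r + i.val) j.val : ℕ) : K)).det ≠ 0 := by
  set M : Matrix (Fin ℓ) (Fin ℓ) K :=
    Matrix.of fun i j : Fin ℓ => ((Pmat a δ ℓ (r + i.val) j.val : ℕ) : K) with hM
  -- the permutation i ↦ i + (ℓ - r % ℓ)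
  haveI : NeZero ℓ := ⟨hℓ.ne'⟩
  set c : Fin ℓ := ⟨(ℓ - r % ℓ) % ℓ, Nat.mod_lt _ hℓ⟩ with hc
  set σ : Equiv.Perm (Fin ℓ) := Equiv.addRight c with hσ
  have hσval : ∀ i : Fin ℓ, (σ i).val = (i.val + (ℓ - r % ℓ) % ℓ) % ℓ := by
    intro i
    simp [hσ, hc, Fin.add_def]
  -- the row-permuted matrix is upper triangular with 1's on the diagonal
  have hentry : ∀ i j : Fin ℓ, j.val ≤ i.val →
      M (σ i) j = ((if (i.val : ℕ) = j.val then 1 else 0 : ℕ) : K) := by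
    intro i j hji
    have hx : r + (σ i).val < δ := by
      have := (σ i).isLt; omega
    have hmod : (r + (σ i).val) % ℓ = i.val := by
      rw [hσval i]; exact key_mod ℓ r i.val hℓ i.isLt
    have hp := pmat_entry a ℓ hℓ δ (r + (σ i).val) j.val hx (by omega)
    simp only [hM, Matrix.of_apply, hp, hmod]
  have htri : (M.submatrix σ id).BlockTriangular id := by
    intro i j hij
    have hji : j.val < i.val := hij
    show M (σ i) j = 0
    rw [hentry i j hji.le, if_neg (by omega), Nat.cast_zero]
  have hdet : (M.submatrix σ id).det = 1 := by
    rw [Matrix.det_of_upperTriangular htri]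
    apply Finset.prod_eq_one
    intro i _
    show M (σ i) i = 1
    rw [hentry i i le_rfl, if_pos rfl, Nat.cast_one]
  intro h0
  have := Matrix.det_permute σ M
  rw [hdet, h0, mul_zero] at this
  exact one_ne_zero this
end

section
/- (Property B1.) For every t ∈ [0:δ−1], there exists a vector w ∈ K^n lying in the K-linear span of the rows of H such that w_t ≠ 0 and w_i = 0 for every index i ∈ [t+1 : t+b−1] ∪ [τ+t+1 : τ+δ]. -/
set_option linter.unusedVariables false

/-- The parity-check matrix `H` of Construction 1, given entrywise (with `δ = b - a`):
`α·I_δ` in the top-left `δ×δ` corner, `P^a_{δ,τ-b}` in columns `[b:τ-1]` of the top `δ` rows,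
`H(0,τ) = α`, `H(j,τ+j) = 1` for `j ∈ [1:δ]`, `I_a` in columns `[0:a-1]` of the bottom `a` rows,
and `C` in columns `[a:τ]` of the bottom `a` rows; all other entries are `0`. -/
def Hmat {K : Type*} [Field K] (a b τ : ℕ) (α : K) (C : ℕ → ℕ → K) (i j : ℕ) : K :=
  if i < b - a then
    if j < b - a then (if i = j then α else 0)
    else if b ≤ j ∧ j < τ then (Pmat a (b - a) (τ - b) i (j - b) : K)
    else if j = τ then (if i = 0 then α else 0)
    else if τ + 1 ≤ j ∧ j ≤ τ + (b - a) then (if j = τ + i then 1 else 0)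
    else 0
  else
    if j < a then (if i = (b - a) + j then 1 else 0)
    else if j ≤ τ then C (i - (b - a)) (j - a)
    else if j = τ + (b - a) then (if i = b - a then 1 else 0)
    else 0

/-- Every square submatrix of the `m × n` matrix `C` (given entrywise) is invertible. -/
def allMinorsInvertible {K : Type*} [Field K] (C : ℕ → ℕ → K) (m n : ℕ) : Prop :=
  ∀ (k : ℕ) (I J : Fin k → ℕ), Function.Injective I → Function.Injective J →
    (∀ i, I i < m) → (∀ j, J j < n) →
    (Matrix.of fun i j : Fin k => C (I i) (J j)).det ≠ 0

lemma Pmat_stack (a u v i j : ℕ) (hv : 0 < v) (hvu : v < u) :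
    Pmat a u v i j = if i < v then (if i = j then 1 else 0) else Pmat a (u - v) v (i - v) j := by
  rw [Pmat.eq_def]
  rw [dif_neg (by omega), dif_pos ⟨hv, hvu⟩]

lemma Pmat_unit (a u v t s : ℕ) (ht : t < u) (hs : s < t)
    (h : ¬ (0 < v ∧ v < u ∧ v ≤ t)) : Pmat a u v t s = 0 := by
  rw [Pmat.eq_def]
  by_cases h1 : 0 < u ∧ u + a < v
  · rw [dif_pos h1, if_pos (by omega), if_neg (by omega)]
  · rw [dif_neg h1]
    by_cases h2 : 0 < v ∧ v < u
    · rw [dif_pos h2, if_pos (by omega), if_neg (by omega)]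
    · rw [dif_neg h2, if_neg (by omega)]

lemma pmat_comb {K : Type*} [Field K] (a : ℕ) :
    ∀ (n u v t : ℕ), u + v = n → t < u →
    ∃ x : ℕ → K, x t = 1 ∧ (∀ i, t < i ∨ i + v < t → x i = 0) ∧
      ∀ s, s < t → s < v →
        (∑ i ∈ Finset.range (t + 1), x i * (Pmat a u v i s : K)) = 0 := by
  intro n
  induction n using Nat.strong_induction_on with
  | _ n ih =>
    intro u v t hn ht
    by_cases h2 : 0 < v ∧ v < u ∧ v ≤ t
    · -- stacking case with t ≥ v : recurse
      obtain ⟨hv, hvu, hvt⟩ := h2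
      obtain ⟨x', hx't, hx'supp, hx'sum⟩ :=
        ih (u - v + v) (by omega) (u - v) v (t - v) rfl (by omega)
      refine ⟨fun i => if i < v then
          -(∑ j ∈ Finset.range (t - v + 1), x' j * (Pmat a (u - v) v j i : K))
        else x' (i - v), ?_, ?_, ?_⟩
      · simp only [if_neg (show ¬ t < v by omega)]
        simpa using hx't
      · intro i hi
        rcases lt_or_ge i v with hiv | hiv
        · simp only [if_pos hiv]
          rw [hx'sum i (by omega) hiv]
          simp
        · simp only [if_neg (show ¬ i < v by omega)]
          exact hx'supp _ (by omega)
      · intro s hst hsv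
        simp only
        have hdisj : Disjoint (Finset.range v) (Finset.Ico v (t + 1)) :=
          Finset.disjoint_left.2 fun i h1 h2 => by
            rw [Finset.mem_range] at h1; rw [Finset.mem_Ico] at h2; omega
        have hun : Finset.range (t + 1) = Finset.range v ∪ Finset.Ico v (t + 1) := by
          rw [Finset.range_eq_Ico, Finset.range_eq_Ico,
            Finset.Ico_union_Ico_eq_Ico (by omega) (by omega)]
        rw [hun, Finset.sum_union hdisj]
        have hfst : (∑ i ∈ Finset.range v,
            (if i < v then
              -(∑ j ∈ Finset.range (t - v + 1), x' j * (Pmat a (u - v) v j i : K))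
             else x' (i - v)) * (Pmat a u v i s : K))
            = -(∑ j ∈ Finset.range (t - v + 1), x' j * (Pmat a (u - v) v j s : K)) := by
          rw [Finset.sum_eq_single s]
          · have h1 : Pmat a u v s s = 1 := by
              rw [Pmat_stack a u v s s hv hvu, if_pos hsv, if_pos rfl]
            rw [if_pos hsv, h1]
            simp
          · intro i hmem his
            rw [Finset.mem_range] at hmem
            have h0 : Pmat a u v i s = 0 := by
              rw [Pmat_stack a u v i s hv hvu, if_pos hmem, if_neg his]
            rw [h0]
            simp
          · intro hsm
            exact absurd (Finset.mem_range.2 hsv) hsm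
        have hsnd : (∑ i ∈ Finset.Ico v (t + 1),
            (if i < v then
              -(∑ j ∈ Finset.range (t - v + 1), x' j * (Pmat a (u - v) v j i : K))
             else x' (i - v)) * (Pmat a u v i s : K))
            = ∑ j ∈ Finset.range (t - v + 1), x' j * (Pmat a (u - v) v j s : K) := by
          rw [Finset.sum_Ico_eq_sum_range]
          have hl : t + 1 - v = t - v + 1 := by omega
          rw [hl]
          refine Finset.sum_congr rfl fun j hj => ?_
          have hP : Pmat a u v (v + j) s = Pmat a (u - v) v j s := by
            rw [Pmat_stack a u v (v + j) s hv hvu, if_neg (show ¬ v + j < v by omega)]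
            congr 1
            omega
          rw [if_neg (show ¬ v + j < v by omega), hP]
          congr 2
          omega
        rw [hfst, hsnd]
        ring
    · -- otherwise the unit vector e_t works
      refine ⟨fun i => if i = t then 1 else 0, by simp, ?_, ?_⟩
      · intro i hi
        show (if i = t then (1 : K) else 0) = 0
        rw [if_neg (by omega)]
      · intro s hst hsv
        rw [Finset.sum_eq_single t]
        · show (if t = t then (1 : K) else 0) * _ = 0
          rw [if_pos rfl, Pmat_unit a u v t s ht hst h2]
          simp
        · intro i _ hit
          show (if i = t then (1 : K) else 0) * _ = 0
          rw [if_neg hit, zero_mul]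
        · intro htm
          exact absurd (Finset.mem_range.2 (by omega)) htm


lemma Hmat_top_val {K : Type*} [Field K] (a b τ : ℕ) (α : K) (C : ℕ → ℕ → K) (k c : ℕ)
    (hk : k < b - a) :
    Hmat a b τ α C k c =
      if c < b - a then (if k = c then α else 0)
      else if b ≤ c ∧ c < τ then (Pmat a (b - a) (τ - b) k (c - b) : K)
      else if c = τ then (if k = 0 then α else 0)
      else if τ + 1 ≤ c ∧ c ≤ τ + (b - a) then (if c = τ + k then 1 else 0)
      else 0 := by
  unfold Hmat
  rw [if_pos hk]

/-- Property B1: for every `t ∈ [0:δ-1]` there is a vector `w ∈ K^n` in the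
`K`-linear span of the rows of `H` with `w t ≠ 0` and `w i = 0` for all
`i ∈ [t+1 : t+b-1] ∪ [τ+t+1 : τ+δ]`. -/
theorem property_B1 {K : Type*} [Field K] (F : Subfield K) (a b τ : ℕ)
    (ha : 0 < a) (hab : a < b) (hbτ : b ≤ τ)
    (α : K) (hα : α ∉ F)
    (C : ℕ → ℕ → K) (hCF : ∀ i j, i < a → j < τ + 1 - a → C i j ∈ F)
    (hC : allMinorsInvertible C a (τ + 1 - a))
    (t : ℕ) (ht : t < b - a) :
    ∃ w : Fin (τ + 1 + (b - a)) → K,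
      w ∈ Submodule.span K
        (Set.range fun i : Fin b => fun j : Fin (τ + 1 + (b - a)) => Hmat a b τ α C i.val j.val) ∧
      w ⟨t, by omega⟩ ≠ 0 ∧
      ∀ i : Fin (τ + 1 + (b - a)),
        ((t + 1 ≤ i.val ∧ i.val ≤ t + b - 1) ∨ (τ + t + 1 ≤ i.val ∧ i.val ≤ τ + (b - a))) →
        w i = 0 := by
  obtain ⟨x, hxt, hxsupp, hxsum⟩ :=
    pmat_comb (K := K) a ((b - a) + (τ - b)) (b - a) (τ - b) t rfl ht
  refine ⟨fun j : Fin (τ + 1 + (b - a)) =>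
      ∑ i ∈ Finset.range (t + 1), x i * Hmat a b τ α C i j.val, ?_, ?_, ?_⟩
  · have heq : (fun j : Fin (τ + 1 + (b - a)) =>
        ∑ i ∈ Finset.range (t + 1), x i * Hmat a b τ α C i j.val)
        = ∑ i ∈ Finset.range (t + 1),
            x i • (fun j : Fin (τ + 1 + (b - a)) => Hmat a b τ α C i j.val) := by
      funext j
      simp [Finset.sum_apply]
    rw [heq]
    refine Submodule.sum_mem _ fun i hi => ?_
    rw [Finset.mem_range] at hi
    exact Submodule.smul_mem _ _ (Submodule.subset_span ⟨⟨i, by omega⟩, rfl⟩)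
  · have hα0 : α ≠ 0 := fun h => hα (h ▸ F.zero_mem)
    show (∑ i ∈ Finset.range (t + 1), x i * Hmat a b τ α C i t) ≠ 0
    have hval : (∑ i ∈ Finset.range (t + 1), x i * Hmat a b τ α C i t) = α := by
      rw [Finset.sum_eq_single t]
      · have h1 : Hmat a b τ α C t t = α := by
          rw [Hmat_top_val a b τ α C t t ht, if_pos ht, if_pos rfl]
        rw [h1, hxt, one_mul]
      · intro i hi hit
        rw [Finset.mem_range] at hi
        have h0 : Hmat a b τ α C i t = 0 := by
          rw [Hmat_top_val a b τ α C i t (by omega), if_pos ht, if_neg hit]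
        rw [h0, mul_zero]
      · intro h
        exact absurd (Finset.mem_range.2 (by omega)) h
    rw [hval]
    exact hα0
  · rintro ⟨c, hcn⟩ hc
    show (∑ k ∈ Finset.range (t + 1), x k * Hmat a b τ α C k c) = 0
    simp only at hc
    rcases hc with ⟨h1, h2⟩ | ⟨h1, h2⟩
    · -- c ∈ [t+1, t+b-1]
      rcases lt_or_ge c (b - a) with hcδ | hcδ
      · refine Finset.sum_eq_zero fun k hk => ?_
        rw [Finset.mem_range] at hk
        rw [Hmat_top_val a b τ α C k c (by omega), if_pos hcδ, if_neg (by omega), mul_zero]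
      rcases lt_or_ge c b with hcb | hcb
      · refine Finset.sum_eq_zero fun k hk => ?_
        rw [Finset.mem_range] at hk
        rw [Hmat_top_val a b τ α C k c (by omega), if_neg (by omega), if_neg (by omega),
          if_neg (by omega), if_neg (by omega), mul_zero]
      rcases lt_or_ge c τ with hcτ | hcτ
      · -- b ≤ c < τ : the Pmat block
        have hsum := hxsum (c - b) (by omega) (by omega)
        calc (∑ k ∈ Finset.range (t + 1), x k * Hmat a b τ α C k c)
            = ∑ k ∈ Finset.range (t + 1), x k * (Pmat a (b - a) (τ - b) k (c - b) : K) := by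
              refine Finset.sum_congr rfl fun k hk => ?_
              rw [Finset.mem_range] at hk
              rw [Hmat_top_val a b τ α C k c (by omega), if_neg (by omega),
                if_pos ⟨hcb, hcτ⟩]
          _ = 0 := hsum
      rcases eq_or_lt_of_le hcτ with hcτ' | hcτ'
      · -- c = τ
        refine Finset.sum_eq_zero fun k hk => ?_
        rw [Finset.mem_range] at hk
        rw [Hmat_top_val a b τ α C k c (by omega), if_neg (by omega), if_neg (by omega),
          if_pos hcτ'.symm]
        by_cases hk0 : k = 0
        · subst hk0
          rw [if_pos rfl, hxsupp 0 (Or.inr (by omega)), zero_mul]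
        · rw [if_neg hk0, mul_zero]
      · -- τ < c ≤ t+b-1
        refine Finset.sum_eq_zero fun k hk => ?_
        rw [Finset.mem_range] at hk
        rw [Hmat_top_val a b τ α C k c (by omega), if_neg (by omega), if_neg (by omega),
          if_neg (by omega), if_pos ⟨by omega, by omega⟩]
        by_cases hck : c = τ + k
        · rw [if_pos hck, hxsupp k (Or.inr (by omega)), zero_mul]
        · rw [if_neg hck, mul_zero]
    · -- c ∈ [τ+t+1, τ+(b-a)]
      refine Finset.sum_eq_zero fun k hk => ?_
      rw [Finset.mem_range] at hk
      rw [Hmat_top_val a b τ α C k c (by omega), if_neg (by omega), if_neg (by omega),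
        if_neg (by omega), if_pos ⟨by omega, h2⟩, if_neg (by omega), mul_zero]
end

section
/- Suppose t ∈ [0:δ−1] and at least one of the following holds: (i) τ − b ≥ δ, (ii) t ≤ τ − b − 1, or (iii) b = τ. Then row t of H itself provides the required parity check for a burst starting at t: H(t,t) = α, and H(t,i) = 0 for every i ∈ [t+1 : t+b−1] ∪ [τ+t+1 : τ+δ]. -/
set_option linter.unusedVariables false

lemma Pmat_eq_zero (a u v t j : ℕ) (hjt : j < t) (htu : t < u)
    (h : t < v ∨ u ≤ v ∨ v = 0) : Pmat a u v t j = 0 := by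
  rw [Pmat]
  split_ifs <;> first | rfl | omega

/-- if `t ∈ [0:δ-1]` and (i) `τ - b ≥ δ`, or (ii) `t ≤ τ - b - 1`, or
(iii) `b = τ`, then row `t` of `H` itself is the required parity check:
`H(t,t) = α` and `H(t,i) = 0` for all `i ∈ [t+1 : t+b-1] ∪ [τ+t+1 : τ+δ]`. -/
theorem property_B1_single_row {K : Type*} [Field K] (F : Subfield K) (a b τ : ℕ)
    (ha : 0 < a) (hab : a < b) (hbτ : b ≤ τ)
    (α : K) (hα : α ∉ F)
    (C : ℕ → ℕ → K) (hCF : ∀ i j, i < a → j < τ + 1 - a → C i j ∈ F)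
    (hC : allMinorsInvertible C a (τ + 1 - a))
    (t : ℕ) (ht : t < b - a)
    (hcase : (b - a) + b ≤ τ ∨ t + b + 1 ≤ τ ∨ b = τ) :
    Hmat a b τ α C t t = α ∧
    ∀ i : ℕ, ((t + 1 ≤ i ∧ i ≤ t + b - 1) ∨ (τ + t + 1 ≤ i ∧ i ≤ τ + (b - a))) →
      Hmat a b τ α C t i = 0 := by
  constructor
  · unfold Hmat
    rw [if_pos ht, if_pos ht, if_pos rfl]
  · intro i hi
    unfold Hmat
    rw [if_pos ht]
    split_ifs <;>
      first
        | rfl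
        | omega
        | (rw [Pmat_eq_zero a (b-a) (τ-b) t (i-b) (by omega) ht (by omega)]
           exact Nat.cast_zero)
end

section
/- Let ℓ = τ − b and suppose 1 ≤ ℓ < δ. Write δ = vℓ + x with 0 ≤ x < ℓ. Then for every t ∈ [ℓ : vℓ−1], the vector w ∈ K^n defined as (row t of H) − (row (t−ℓ) of H) satisfies w_t = α and w_i = 0 for every i ∈ [t+1 : t+b−1] ∪ [τ+t+1 : τ+δ]. -/
set_option linter.unusedVariables false

lemma pmat_block (a ℓ x : ℕ) (hℓ : 0 < ℓ) (hx : x < ℓ) :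
    ∀ v δ r j, δ = v * ℓ + x → r < v * ℓ → j < ℓ →
      Pmat a δ ℓ r j = if r % ℓ = j then 1 else 0 := by
  intro v
  induction v with
  | zero => intro δ r j _ hr _; exact absurd hr (by omega)
  | succ n ih =>
    intro δ r j hδ hr hj
    have hmul : (n + 1) * ℓ = n * ℓ + ℓ := by ring
    rw [Pmat]
    rw [dif_neg (by omega)]
    by_cases h2 : 0 < ℓ ∧ ℓ < δ
    · rw [dif_pos h2]
      by_cases hrℓ : r < ℓ
      · rw [if_pos hrℓ, Nat.mod_eq_of_lt hrℓ]
      · rw [if_neg hrℓ]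
        have hm : (r - ℓ) % ℓ = r % ℓ := (Nat.mod_eq_sub_mod (by omega)).symm
        rw [ih (δ - ℓ) (r - ℓ) j (by omega) (by omega) hj, hm]
    · rw [dif_neg h2]
      -- here δ = ℓ and r < ℓ
      have hrℓ : r < ℓ := by omega
      rw [Nat.mod_eq_of_lt hrℓ]
      by_cases hrj : r = j
      · rw [if_pos ⟨hrj, by omega⟩, if_pos hrj]
      · rw [if_neg (by tauto), if_neg hrj]

/-- let `ℓ = τ - b` with `1 ≤ ℓ < δ` and write `δ = v·ℓ + x`, `0 ≤ x < ℓ`.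
For every `t ∈ [ℓ : v·ℓ - 1]`, the vector `w = (row t of H) - (row (t-ℓ) of H)` satisfies
`w t = α` and `w i = 0` for every `i ∈ [t+1 : t+b-1] ∪ [τ+t+1 : τ+δ]`. -/
theorem property_B1_row_difference {K : Type*} [Field K] (F : Subfield K) (a b τ : ℕ)
    (ha : 0 < a) (hab : a < b) (hbτ : b ≤ τ)
    (α : K) (hα : α ∉ F)
    (C : ℕ → ℕ → K) (hCF : ∀ i j, i < a → j < τ + 1 - a → C i j ∈ F)
    (hC : allMinorsInvertible C a (τ + 1 - a))
    (hℓpos : 1 ≤ τ - b) (hℓδ : τ - b < b - a)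
    (v x : ℕ) (hvx : b - a = v * (τ - b) + x) (hx : x < τ - b)
    (t : ℕ) (ht1 : τ - b ≤ t) (ht2 : t < v * (τ - b)) :
    Hmat a b τ α C t t - Hmat a b τ α C (t - (τ - b)) t = α ∧
    ∀ i : ℕ, ((t + 1 ≤ i ∧ i ≤ t + b - 1) ∨ (τ + t + 1 ≤ i ∧ i ≤ τ + (b - a))) →
      Hmat a b τ α C t i - Hmat a b τ α C (t - (τ - b)) i = 0 := by
  have hvℓδ : v * (τ - b) ≤ b - a := by omega
  have htδ : t < b - a := by omega
  have ht'δ : t - (τ - b) < b - a := by omega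
  constructor
  · have E1 : Hmat a b τ α C t t = α := by
      unfold Hmat; rw [if_pos htδ, if_pos htδ, if_pos rfl]
    have E2 : Hmat a b τ α C (t - (τ - b)) t = 0 := by
      unfold Hmat; rw [if_pos ht'δ, if_pos htδ, if_neg (by omega)]
    rw [E1, E2, sub_zero]
  · intro i hi
    by_cases hC : b ≤ i ∧ i < τ
    · have E1 : Hmat a b τ α C t i = (Pmat a (b - a) (τ - b) t (i - b) : K) := by
        unfold Hmat; rw [if_pos htδ, if_neg (by omega), if_pos hC]
      have E2 : Hmat a b τ α C (t - (τ - b)) i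
          = (Pmat a (b - a) (τ - b) (t - (τ - b)) (i - b) : K) := by
        unfold Hmat; rw [if_pos ht'δ, if_neg (by omega), if_pos hC]
      have e1 := pmat_block a (τ - b) x hℓpos hx v (b - a) t (i - b) hvx ht2 (by omega)
      have e2 := pmat_block a (τ - b) x hℓpos hx v (b - a) (t - (τ - b)) (i - b) hvx
        (by omega) (by omega)
      have hmod : (t - (τ - b)) % (τ - b) = t % (τ - b) :=
        (Nat.mod_eq_sub_mod ht1).symm
      rw [E1, E2, e1, e2, hmod, sub_self]
    · unfold Hmat
      split_ifs <;> first
        | exact sub_self _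
        | (exfalso; omega)
end

section
/- Let ℓ = τ − b and suppose 1 ≤ ℓ < δ. Write δ = vℓ + x with 0 ≤ x < ℓ, and suppose x ≥ 1. Then for every t ∈ [vℓ : vℓ+x−1], there exists a set S ⊆ [0 : t−1] of row indices such that the vector w ∈ K^n defined as (row t of H) − Σ_{j∈S} (row j of H) satisfies w_t = α and w_i = 0 for every i ∈ [t+1 : t+b−1] ∪ [τ+t+1 : τ+δ]. -/
set_option linter.unusedVariables false

section Helpers

lemma Pmat_zero_or_one (a : ℕ) : ∀ n u v i j, u + v ≤ n → Pmat a u v i j = 0 ∨ Pmat a u v i j = 1 := by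
  intro n
  induction n with
  | zero =>
    intro u v i j h
    rw [Pmat.eq_def]
    split_ifs <;> omega
  | succ n ih =>
    intro u v i j h
    rw [Pmat.eq_def]
    split_ifs with h1 h2 h3 h4 h5 h6 <;> first
      | omega
      | (apply ih; omega)

lemma Pmat_id (a u ℓ i j : ℕ) (h1 : ℓ < u) (h2 : i < ℓ) :
    Pmat a u ℓ i j = if i = j then 1 else 0 := by
  rw [Pmat.eq_def]
  rw [dif_neg (by omega), dif_pos ⟨by omega, h1⟩, if_pos h2]

lemma Pmat_step (a u ℓ i j : ℕ) (h1 : ℓ < u) (h2 : ℓ ≤ i) (h0 : 0 < ℓ) :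
    Pmat a u ℓ i j = Pmat a (u - ℓ) ℓ (i - ℓ) j := by
  rw [Pmat.eq_def]
  rw [dif_neg (by omega), dif_pos ⟨h0, h1⟩, if_neg (by omega)]

lemma Pmat_strip (a ℓ : ℕ) (h0 : 0 < ℓ) (k : ℕ) :
    ∀ δ i j, k * ℓ ≤ i → k * ℓ < δ → Pmat a δ ℓ i j = Pmat a (δ - k * ℓ) ℓ (i - k * ℓ) j := by
  induction k with
  | zero => intro δ i j _ _; simp
  | succ k ih =>
    intro δ i j h1 h2
    have hk : (k + 1) * ℓ = k * ℓ + ℓ := by ring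
    rw [ih δ i j (by omega) (by omega)]
    rw [Pmat_step a (δ - k * ℓ) ℓ (i - k * ℓ) j (by omega) (by omega) h0]
    congr 1 <;> omega

lemma Pmat_low (a x ℓ r c : ℕ) (hrx : r < x) (hxℓ : x < ℓ) (hcr : c ≤ r) :
    Pmat a x ℓ r c = if r = c then 1 else 0 := by
  rw [Pmat.eq_def]
  by_cases h1 : 0 < x ∧ x + a < ℓ
  · rw [dif_pos h1, if_pos (by omega : c < x)]
  · rw [dif_neg h1, dif_neg (by omega)]
    by_cases h : r = c
    · simp [h, show c < x by omega]
    · simp [h]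

variable {K : Type*} [Field K] {a b τ : ℕ} {α : K} {C : ℕ → ℕ → K} {i j : ℕ}

lemma Hmat_tt (hi : i < b - a) (hj : j < b - a) :
    Hmat a b τ α C i j = if i = j then α else 0 := by
  unfold Hmat; rw [if_pos hi, if_pos hj]

lemma Hmat_mid0 (hi : i < b - a) (hj1 : b - a ≤ j) (hj2 : j < b) (hbτ : b ≤ τ) :
    Hmat a b τ α C i j = 0 := by
  unfold Hmat
  rw [if_pos hi, if_neg (by omega), if_neg (by omega), if_neg (by omega), if_neg (by omega)]

lemma Hmat_P (hi : i < b - a) (hj1 : b ≤ j) (hj2 : j < τ) :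
    Hmat a b τ α C i j = (Pmat a (b - a) (τ - b) i (j - b) : K) := by
  unfold Hmat
  rw [if_pos hi, if_neg (by omega), if_pos ⟨hj1, hj2⟩]

lemma Hmat_tau (hi : i < b - a) (hbτ : b ≤ τ) :
    Hmat a b τ α C i τ = if i = 0 then α else 0 := by
  unfold Hmat
  rw [if_pos hi, if_neg (by omega), if_neg (by omega), if_pos rfl]

lemma Hmat_tail (hi : i < b - a) (hj : τ < j) (hbτ : b ≤ τ) (hne : j ≠ τ + i) :
    Hmat a b τ α C i j = 0 := by
  unfold Hmat
  rw [if_pos hi, if_neg (by omega), if_neg (by omega), if_neg (by omega),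
    if_neg hne, ite_self]

end Helpers
/-- let `ℓ = τ - b` with `1 ≤ ℓ < δ` and write `δ = v·ℓ + x`, `0 ≤ x < ℓ`,
with `x ≥ 1`.  For every `t ∈ [v·ℓ : v·ℓ + x - 1]` there is a set `S ⊆ [0 : t-1]` of row
indices such that `w = (row t of H) - Σ_{j ∈ S} (row j of H)` satisfies `w t = α` and
`w i = 0` for every `i ∈ [t+1 : t+b-1] ∪ [τ+t+1 : τ+δ]`. -/
theorem property_B1_row_combination {K : Type*} [Field K] (F : Subfield K) (a b τ : ℕ)
    (ha : 0 < a) (hab : a < b) (hbτ : b ≤ τ)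
    (α : K) (hα : α ∉ F)
    (C : ℕ → ℕ → K) (hCF : ∀ i j, i < a → j < τ + 1 - a → C i j ∈ F)
    (hC : allMinorsInvertible C a (τ + 1 - a))
    (hℓpos : 1 ≤ τ - b) (hℓδ : τ - b < b - a)
    (v x : ℕ) (hvx : b - a = v * (τ - b) + x) (hx : x < τ - b) (hxpos : 1 ≤ x)
    (t : ℕ) (ht1 : v * (τ - b) ≤ t) (ht2 : t < v * (τ - b) + x) :
    ∃ S : Finset ℕ, (∀ j ∈ S, j < t) ∧
      Hmat a b τ α C t t - ∑ j ∈ S, Hmat a b τ α C j t = α ∧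
      ∀ i : ℕ, ((t + 1 ≤ i ∧ i ≤ t + b - 1) ∨ (τ + t + 1 ≤ i ∧ i ≤ τ + (b - a))) →
        Hmat a b τ α C t i - ∑ j ∈ S, Hmat a b τ α C j i = 0 := by
  have hv : 1 ≤ v := by
    rcases Nat.eq_zero_or_pos v with h | h
    · subst h; simp at hvx; omega
    · exact h
  obtain ⟨m, hm⟩ : ∃ m, v * (τ - b) = m := ⟨_, rfl⟩
  obtain ⟨p, hp⟩ : ∃ p, (v - 1) * (τ - b) = p := ⟨_, rfl⟩
  rw [hm] at hvx ht1 ht2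
  have hpm : p + (τ - b) = m := by
    have h1 : v - 1 + 1 = v := Nat.sub_add_cancel hv
    calc p + (τ - b) = (v - 1) * (τ - b) + 1 * (τ - b) := by rw [hp, one_mul]
      _ = (v - 1 + 1) * (τ - b) := (add_mul _ _ _).symm
      _ = m := by rw [h1, hm]
  -- specialized strip lemmas
  have hstrip_t : ∀ cc, Pmat a (b - a) (τ - b) t cc = Pmat a x (τ - b) (t - m) cc := by
    intro cc
    have h := Pmat_strip a (τ - b) (by omega) v (b - a) t cc (by rw [hm]; omega)
      (by rw [hm]; omega)
    rw [hm] at h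
    rw [h, show b - a - m = x by omega]
  have hstrip_row : ∀ c' cc, c' < τ - b →
      Pmat a (b - a) (τ - b) (p + c') cc = if c' = cc then 1 else 0 := by
    intro c' cc hc'
    have h := Pmat_strip a (τ - b) (by omega) (v - 1) (b - a) (p + c') cc
      (by rw [hp]; omega) (by rw [hp]; omega)
    rw [hp] at h
    rw [h, show p + c' - p = c' by omega]
    exact Pmat_id a _ _ _ _ (by omega) hc'
  have hwin : ∀ c', c' < τ - b → Pmat a (b - a) (τ - b) t c' = 1 → t - m ≤ c' := by
    intro c' h1 h2
    by_contra h3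
    push_neg at h3
    rw [hstrip_t c', Pmat_low a x (τ - b) (t - m) c' (by omega) hx (by omega),
      if_neg (by omega)] at h2
    omega
  set S : Finset ℕ := ((Finset.range (τ - b)).filter
      (fun c => Pmat a (b - a) (τ - b) t c = 1)).image (fun c => p + c) with hSdef
  have hS : ∀ j ∈ S, ∃ c', c' < τ - b ∧ Pmat a (b - a) (τ - b) t c' = 1 ∧ j = p + c' := by
    intro j hj
    simp only [hSdef, Finset.mem_image, Finset.mem_filter, Finset.mem_range] at hj
    obtain ⟨c', ⟨h1, h2⟩, h3⟩ := hj
    exact ⟨c', h1, h2, h3.symm⟩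
  have hSwin : ∀ j ∈ S, t - (τ - b) ≤ j ∧ j < t := by
    intro j hj
    obtain ⟨c', h1, h2, h3⟩ := hS j hj
    have h4 := hwin c' h1 h2
    omega
  have hz : ∀ i : ℕ, Hmat a b τ α C t i = 0 → (∀ j ∈ S, Hmat a b τ α C j i = 0) →
      Hmat a b τ α C t i - ∑ j ∈ S, Hmat a b τ α C j i = 0 := by
    intro i h1 h2
    rw [h1, Finset.sum_eq_zero h2, sub_zero]
  refine ⟨S, fun j hj => (hSwin j hj).2, ?_, ?_⟩
  · rw [Hmat_tt (show t < b - a by omega) (show t < b - a by omega), if_pos rfl,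
      Finset.sum_eq_zero, sub_zero]
    intro j hj
    have h1 := hSwin j hj
    rw [Hmat_tt (by omega) (by omega), if_neg (by omega)]
  · rintro i (⟨hi1, hi2⟩ | ⟨hi1, hi2⟩)
    · -- t+1 ≤ i ≤ t+b-1
      rcases show i < b - a ∨ (b - a ≤ i ∧ i < b) ∨ (b ≤ i ∧ i < τ) ∨ i = τ ∨ τ < i by omega
        with h | h | h | h | h
      · refine hz i ?_ ?_
        · rw [Hmat_tt (by omega) h, if_neg (by omega)]
        · intro j hj
          have h1 := hSwin j hj
          rw [Hmat_tt (by omega) h, if_neg (by omega)]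
      · refine hz i ?_ ?_
        · exact Hmat_mid0 (by omega) h.1 h.2 hbτ
        · intro j hj
          have h1 := hSwin j hj
          exact Hmat_mid0 (by omega) h.1 h.2 hbτ
      · -- main case: b ≤ i < τ
        obtain ⟨hib, hiτ⟩ := h
        rw [Hmat_P (by omega) hib hiτ, hSdef,
          Finset.sum_image (fun c1 _ c2 _ hh => by omega)]
        have hrw : ∀ c' ∈ (Finset.range (τ - b)).filter
            (fun c' => Pmat a (b - a) (τ - b) t c' = 1),
            Hmat a b τ α C (p + c') i = if c' = i - b then (1 : K) else 0 := by
          intro c' hc'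
          simp only [Finset.mem_filter, Finset.mem_range] at hc'
          rw [Hmat_P (by omega) hib hiτ, hstrip_row c' (i - b) hc'.1]
          split_ifs <;> simp
        rw [Finset.sum_congr rfl hrw, Finset.sum_ite_eq' _ (i - b) (fun _ => (1 : K))]
        rcases Pmat_zero_or_one a (b - a + (τ - b)) (b - a) (τ - b) t (i - b) le_rfl
          with h0 | h0
        · have hnot : i - b ∉ (Finset.range (τ - b)).filter
              (fun c' => Pmat a (b - a) (τ - b) t c' = 1) := by
            simp only [Finset.mem_filter, Finset.mem_range, not_and]
            intro _
            omega
          rw [h0, if_neg hnot]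
          simp
        · have hmem : i - b ∈ (Finset.range (τ - b)).filter
              (fun c' => Pmat a (b - a) (τ - b) t c' = 1) := by
            simp only [Finset.mem_filter, Finset.mem_range]
            exact ⟨by omega, h0⟩
          rw [h0, if_pos hmem]
          simp
      · -- i = τ
        refine hz i ?_ ?_
        · rw [h, Hmat_tau (by omega) hbτ, if_neg (by omega)]
        · intro j hj
          have h1 := hSwin j hj
          rw [h, Hmat_tau (by omega) hbτ, if_neg (by omega)]
      · -- τ < i ≤ t + b - 1
        refine hz i ?_ ?_
        · exact Hmat_tail (by omega) h hbτ (by omega)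
        · intro j hj
          have h1 := hSwin j hj
          exact Hmat_tail (by omega) h hbτ (by omega)
    · -- τ + t + 1 ≤ i ≤ τ + (b - a)
      refine hz i ?_ ?_
      · exact Hmat_tail (by omega) (by omega) hbτ (by omega)
      · intro j hj
        have h1 := hSwin j hj
        exact Hmat_tail (by omega) (by omega) hbτ (by omega)
end

section
/- (Property R1.) For every t ∈ [0:δ−1] and every set A ⊆ [t+1 : τ+t] of column indices with |A| = a−1, column t of H (a vector in K^b) does not lie in the K-linear span of the columns of H indexed by A. -/
set_option linter.unusedVariables false

/-- Kernel lemma: any ≤ a columns of `[I_a | C]` are linearly independent. -/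
lemma mds_kernel {K : Type*} [Field K] (a τ : ℕ)
    (C : ℕ → ℕ → K) (hC : allMinorsInvertible C a (τ + 1 - a))
    (S : Finset ℕ) (hS : ∀ j ∈ S, j ≤ τ) (hcard : S.card ≤ a)
    (d : ℕ → K)
    (hker : ∀ r : Fin a,
      ∑ j ∈ S, d j * (if j < a then (if (r : ℕ) = j then 1 else 0) else C r (j - a)) = 0) :
    ∀ j ∈ S, d j = 0 := by
  classical
  set S1 : Finset ℕ := S.filter (fun j => j < a) with hS1
  set S2 : Finset ℕ := S.filter (fun j => ¬ j < a) with hS2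
  have hsum_split : ∀ r : Fin a, (r : ℕ) ∉ S1 →
      ∑ j ∈ S2, d j * C r (j - a) = 0 := by
    intro r hr
    have h := hker r
    rw [← Finset.filter_union_filter_not_eq (fun j => j < a) S,
      Finset.sum_union (Finset.disjoint_filter_filter_not S S _)] at h
    have h1 : ∑ j ∈ S1, d j * (if j < a then (if (r : ℕ) = j then 1 else 0) else C r (j - a)) = 0 := by
      apply Finset.sum_eq_zero
      intro j hj
      have hja : j < a := (Finset.mem_filter.mp hj).2
      have hne : (r : ℕ) ≠ j := by rintro rfl; exact hr hj
      simp [hja, hne]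
    have h2 : ∑ j ∈ S2, d j * (if j < a then (if (r : ℕ) = j then 1 else 0) else C r (j - a))
        = ∑ j ∈ S2, d j * C r (j - a) := by
      apply Finset.sum_congr rfl
      intro j hj
      have hja : ¬ j < a := (Finset.mem_filter.mp hj).2
      simp [hja]
    rw [h1, h2] at h
    simpa using h
  -- pick rows
  have hScard' : S1.card + S2.card = S.card := Finset.card_filter_add_card_filter_not _
  have hS1sub : S1 ⊆ Finset.range a := by
    intro j hj
    exact Finset.mem_range.mpr (Finset.mem_filter.mp hj).2
  set R0 : Finset ℕ := Finset.range a \ S1 with hR0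
  have hR0card : R0.card = a - S1.card := by
    rw [hR0, Finset.card_sdiff_of_subset hS1sub, Finset.card_range]
  have hk : S2.card ≤ R0.card := by
    have h1 : S1.card ≤ a := le_trans (Finset.card_le_card hS1sub) (by simp)
    omega
  obtain ⟨R, hRsub, hRcard⟩ := Finset.exists_subset_card_eq hk
  set k := S2.card with hkdef
  have hRcard' : R.card = k := hRcard
  have e2 := S2.orderIsoOfFin (rfl : S2.card = k)
  have eR := R.orderIsoOfFin hRcard'
  set M : Matrix (Fin k) (Fin k) K :=
    Matrix.of (fun i j : Fin k => C ((eR i : ℕ)) ((e2 j : ℕ) - a)) with hM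
  have hmemS2 : ∀ j : Fin k, (e2 j : ℕ) ∈ S2 := fun j => (e2 j).2
  have hmemR : ∀ i : Fin k, (eR i : ℕ) ∈ R := fun i => (eR i).2
  have hRa : ∀ i : Fin k, (eR i : ℕ) < a := by
    intro i
    have := hRsub (hmemR i)
    rw [hR0, Finset.mem_sdiff, Finset.mem_range] at this
    exact this.1
  have hRnS1 : ∀ i : Fin k, (eR i : ℕ) ∉ S1 := by
    intro i
    have := hRsub (hmemR i)
    rw [hR0, Finset.mem_sdiff] at this
    exact this.2
  have hS2a : ∀ j : Fin k, a ≤ (e2 j : ℕ) := by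
    intro j
    have := Finset.mem_filter.mp (hmemS2 j)
    omega
  have hS2τ : ∀ j : Fin k, (e2 j : ℕ) ≤ τ := by
    intro j
    exact hS (e2 j) (Finset.mem_filter.mp (hmemS2 j)).1
  have hdet : M.det ≠ 0 := by
    apply hC k (fun i => (eR i : ℕ)) (fun j => (e2 j : ℕ) - a)
    · intro x y hxy
      have : eR x = eR y := Subtype.ext hxy
      exact eR.injective this
    · intro x y hxy
      have hx := hS2a x
      have hy := hS2a y
      have hxy' : (e2 x : ℕ) - a = (e2 y : ℕ) - a := hxy
      have : (e2 x : ℕ) = (e2 y : ℕ) := by omega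
      exact e2.injective (Subtype.ext this)
    · exact hRa
    · intro j
      have h1 := hS2a j
      have h2 := hS2τ j
      omega
  have hmul : M.mulVec (fun j => d (e2 j)) = 0 := by
    funext i
    have hrow := hsum_split ⟨(eR i : ℕ), hRa i⟩ (hRnS1 i)
    have hconv : ∑ j ∈ S2, d j * C (eR i : ℕ) (j - a)
        = ∑ j : Fin k, d (e2 j) * C (eR i : ℕ) ((e2 j : ℕ) - a) := by
      rw [← Finset.sum_coe_sort S2 (fun j => d j * C (eR i : ℕ) (j - a))]
      exact (Fintype.sum_equiv e2.toEquiv _ _ (fun j => rfl)).symm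
    simp only [Matrix.mulVec, dotProduct, hM, Matrix.of_apply, Pi.zero_apply]
    rw [Finset.sum_congr rfl (fun (j : Fin k) _ => mul_comm (C (↑(eR i)) (↑(e2 j) - a)) (d ↑(e2 j))), ← hconv]
    simpa using hrow
  have hvzero : (fun j : Fin k => d (e2 j)) = 0 := by
    have hU : IsUnit M := (Matrix.isUnit_iff_isUnit_det M).mpr (isUnit_iff_ne_zero.mpr hdet)
    exact Matrix.mulVec_injective_iff_isUnit.mpr hU (by rw [hmul, Matrix.mulVec_zero])
  have hS2zero : ∀ j ∈ S2, d j = 0 := by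
    intro j hj
    have := congrFun hvzero (e2.symm ⟨j, hj⟩)
    simpa using this
  intro j hj
  by_cases hja : j < a
  · have hjS1 : j ∈ S1 := Finset.mem_filter.mpr ⟨hj, hja⟩
    have h := hker ⟨j, hja⟩
    rw [← Finset.filter_union_filter_not_eq (fun j => j < a) S,
      Finset.sum_union (Finset.disjoint_filter_filter_not S S _)] at h
    have h2 : ∑ j' ∈ S2, d j' * (if j' < a then (if j = j' then 1 else 0) else C j (j' - a)) = 0 := by
      apply Finset.sum_eq_zero
      intro j' hj'
      rw [hS2zero j' hj']
      ring
    have h1 : ∑ j' ∈ S1, d j' * (if j' < a then (if j = j' then 1 else 0) else C j (j' - a)) = d j := by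
      rw [Finset.sum_eq_single j]
      · simp [hja]
      · intro j' hj' hne
        have : j' < a := (Finset.mem_filter.mp hj').2
        simp [this, (Ne.symm hne)]
      · intro habs
        exact absurd hjS1 habs
    simp only [Fin.val_mk] at h
    rw [h1, h2] at h
    simpa using h
  · exact hS2zero j (Finset.mem_filter.mpr ⟨hj, hja⟩)

/-- Bottom rows of columns `[0:τ]` of `H` are the columns of `[I_a | C]`. -/
lemma Hmat_bot {K : Type*} [Field K] (a b τ : ℕ) (α : K) (C : ℕ → ℕ → K)
    (j : ℕ) (hj : j ≤ τ) (r : ℕ) (hr : r < a) :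
    Hmat a b τ α C (b - a + r) j
      = (if j < a then (if r = j then 1 else 0) else C r (j - a)) := by
  unfold Hmat
  rw [if_neg (by omega : ¬ (b - a + r < b - a))]
  by_cases hja : j < a
  · rw [if_pos hja, if_pos hja]
    by_cases he : r = j
    · rw [if_pos (by omega), if_pos he]
    · rw [if_neg (by omega), if_neg he]
  · rw [if_neg hja, if_neg hja, if_pos hj]
    have : b - a + r - (b - a) = r := by omega
    rw [this]

/-- Bottom rows of columns `(τ : τ + t]` of `H` vanish, when `t < b - a`. -/
lemma Hmat_bot_hi {K : Type*} [Field K] (a b τ : ℕ) (α : K) (C : ℕ → ℕ → K)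
    (t : ℕ) (ht : t < b - a) (hab : a < b) (hbτ : b ≤ τ)
    (j : ℕ) (hj1 : τ < j) (hj2 : j ≤ τ + t) (r : ℕ) (hr : r < a) :
    Hmat a b τ α C (b - a + r) j = 0 := by
  unfold Hmat
  rw [if_neg (by omega : ¬ (b - a + r < b - a)), if_neg (by omega : ¬ j < a),
    if_neg (by omega : ¬ j ≤ τ), if_neg (by omega : ¬ j = τ + (b - a))]

/-- Property R1: for every `t ∈ [0:δ-1]` and every set `A ⊆ [t+1 : τ+t]` of
column indices with `|A| = a - 1`, column `t` of `H` does not lie in the `K`-linear span of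
the columns of `H` indexed by `A`. -/
theorem property_R1 {K : Type*} [Field K] (F : Subfield K) (a b τ : ℕ)
    (ha : 0 < a) (hab : a < b) (hbτ : b ≤ τ)
    (α : K) (hα : α ∉ F)
    (C : ℕ → ℕ → K) (hCF : ∀ i j, i < a → j < τ + 1 - a → C i j ∈ F)
    (hC : allMinorsInvertible C a (τ + 1 - a))
    (t : ℕ) (ht : t < b - a)
    (A : Finset ℕ) (hA : ∀ j ∈ A, t + 1 ≤ j ∧ j ≤ τ + t) (hcard : A.card = a - 1) :
    (fun i : Fin b => Hmat a b τ α C i.val t) ∉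
      Submodule.span K ((fun j : ℕ => fun i : Fin b => Hmat a b τ α C i.val j) '' ↑A) := by
  classical
  intro hmem
  rw [Set.image_eq_range] at hmem
  rw [Submodule.mem_span_range_iff_exists_fun] at hmem
  obtain ⟨c, hc⟩ := hmem
  have htA : t ∉ A := fun h => by have := (hA t h).1; omega
  -- coefficient function on ℕ
  set c' : ℕ → K := fun j => if hj : j ∈ (↑A : Set ℕ) then c ⟨j, hj⟩ else 0 with hc'
  set d : ℕ → K := fun j => if j = t then 1 else - c' j with hd
  set S : Finset ℕ := insert t (A.filter (fun j => j ≤ τ)) with hSdef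
  have hSsub : ∀ j ∈ S, j ≤ τ := by
    intro j hj
    rw [hSdef, Finset.mem_insert] at hj
    rcases hj with rfl | hj
    · omega
    · exact (Finset.mem_filter.mp hj).2
  have hScard : S.card ≤ a := by
    calc S.card ≤ (A.filter (fun j => j ≤ τ)).card + 1 := Finset.card_insert_le _ _
    _ ≤ A.card + 1 := by
        have := Finset.card_filter_le A (fun j => j ≤ τ)
        omega
    _ ≤ a := by omega
  -- the row-wise equations
  have hker : ∀ r : Fin a,
      ∑ j ∈ S, d j * (if j < a then (if (r : ℕ) = j then 1 else 0) else C r (j - a)) = 0 := by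
    intro r
    have hrlt : b - a + (r : ℕ) < b := by omega
    have hrow := congrFun hc ⟨b - a + (r : ℕ), hrlt⟩
    simp only [Finset.sum_apply, Pi.smul_apply, smul_eq_mul] at hrow
    -- hrow : ∑ i : ↥↑A, c i * Hmat a b τ α C (b-a+r) ↑i = Hmat a b τ α C (b-a+r) t
    have hrow2 : ∑ j ∈ A, c' j * Hmat a b τ α C (b - a + (r : ℕ)) j
        = Hmat a b τ α C (b - a + (r : ℕ)) t := by
      rw [← hrow, ← Finset.sum_coe_sort A
        (fun j => c' j * Hmat a b τ α C (b - a + (r : ℕ)) j)]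
      apply Fintype.sum_congr
      intro i
      have hiA : (i : ℕ) ∈ (↑A : Set ℕ) := i.2
      rw [hc']
      simp only [dif_pos hiA]
      rfl
    -- split A into ≤ τ and > τ
    have hsplit : ∑ j ∈ A, c' j * Hmat a b τ α C (b - a + (r : ℕ)) j
        = ∑ j ∈ A.filter (fun j => j ≤ τ), c' j * Hmat a b τ α C (b - a + (r : ℕ)) j := by
      rw [← Finset.sum_filter_add_sum_filter_not A (fun j => j ≤ τ)]
      have hz : ∑ j ∈ A.filter (fun j => ¬ j ≤ τ), c' j * Hmat a b τ α C (b - a + (r : ℕ)) j = 0 := by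
        apply Finset.sum_eq_zero
        intro j hj
        obtain ⟨hjA, hjτ⟩ := Finset.mem_filter.mp hj
        rw [Hmat_bot_hi a b τ α C t ht hab hbτ j (by omega) (hA j hjA).2 r r.isLt]
        ring
      rw [hz, add_zero]
    -- compute the sum over S
    rw [hSdef, Finset.sum_insert (by
      intro hcontra
      exact htA (Finset.mem_filter.mp hcontra).1)]
    have hdt : d t = 1 := by rw [hd]; simp
    have hsum2 : ∑ j ∈ A.filter (fun j => j ≤ τ),
        d j * (if j < a then (if (r : ℕ) = j then 1 else 0) else C r (j - a))
        = - ∑ j ∈ A.filter (fun j => j ≤ τ), c' j * Hmat a b τ α C (b - a + (r : ℕ)) j := by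
      rw [← Finset.sum_neg_distrib]
      apply Finset.sum_congr rfl
      intro j hj
      obtain ⟨hjA, hjτ⟩ := Finset.mem_filter.mp hj
      have hjt : j ≠ t := by have := (hA j hjA).1; omega
      rw [Hmat_bot a b τ α C j hjτ r r.isLt, hd]
      simp only [if_neg hjt]
      ring
    have htτ : t ≤ τ := by omega
    rw [hdt, one_mul, hsum2, ← hsplit, hrow2, Hmat_bot a b τ α C t htτ r r.isLt]
    ring
  have hfinal := mds_kernel a τ C hC S hSsub hScard d hker t (Finset.mem_insert_self _ _)
  rw [hd] at hfinal
  simp at hfinal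
end

section
/- (Property R2.) For every set A ⊆ [δ : τ+δ] of column indices with |A| = a, the columns of H indexed by A are linearly independent over K. -/
set_option linter.unusedVariables false

section Aux

variable {K : Type*} [Field K]

/-- Bottom-row entries of `Hmat`. -/
lemma Hmat_bot_eq (a b τ : ℕ) (α : K) (C : ℕ → ℕ → K)
    (ha : 0 < a) (hab : a < b) (hbτ : b ≤ τ) (p j : ℕ) (hp : p < a) :
    Hmat a b τ α C (b - a + p) j =
      if j ≤ τ then (if j < a then (if p = j then (1:K) else 0) else C p (j - a))
      else if j = τ + (b - a) then (if p = 0 then (1:K) else 0) else 0 := by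
  unfold Hmat
  rw [if_neg (by omega : ¬ (b - a + p < b - a))]
  by_cases h1 : j < a
  · rw [if_pos h1, if_pos (by omega : j ≤ τ), if_pos h1]
    by_cases hpj : p = j
    · subst hpj; simp
    · rw [if_neg (by omega : ¬ (b - a + p = b - a + j)), if_neg hpj]
  · rw [if_neg h1, if_neg h1]
    by_cases h2 : j ≤ τ
    · rw [if_pos h2, if_pos h2]
      have : b - a + p - (b - a) = p := by omega
      rw [this]
    · rw [if_neg h2, if_neg h2]
      by_cases h3 : j = τ + (b - a)
      · rw [if_pos h3, if_pos h3]
        by_cases hp0 : p = 0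
        · subst hp0; simp
        · rw [if_neg (by omega : ¬ (b - a + p = b - a)), if_neg hp0]
      · rw [if_neg h3, if_neg h3]

/-- Top-row entries of `Hmat` in the rightmost columns. -/
lemma Hmat_top (a b τ : ℕ) (α : K) (C : ℕ → ℕ → K)
    (hab : a < b) (hbτ : b ≤ τ) (i j : ℕ)
    (hi : i < b - a) (h1 : τ < j) (h2 : j ≤ τ + (b - a)) :
    Hmat a b τ α C i j = if j = τ + i then (1:K) else 0 := by
  unfold Hmat
  rw [if_pos hi, if_neg (by omega : ¬ j < b - a),
    if_neg (by omega : ¬ (b ≤ j ∧ j < τ)), if_neg (by omega : ¬ j = τ),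
    if_pos (show τ + 1 ≤ j ∧ j ≤ τ + (b - a) by omega)]

/-- Any at most `a` columns of `[I_a | C]` are linearly independent over `K`. -/
lemma key_cols (a τ : ℕ) (C : ℕ → ℕ → K)
    (hC : allMinorsInvertible C a (τ + 1 - a))
    (B : Finset ℕ) (hB : ∀ j ∈ B, j ≤ τ) (hcard : B.card ≤ a) (g : ℕ → K)
    (heq : ∀ p, p < a →
      ∑ j ∈ B, g j * (if j < a then (if p = j then (1:K) else 0) else C p (j - a)) = 0) :
    ∀ j ∈ B, g j = 0 := by
  classical
  have hEJ : (B.filter (fun j => j < a)).card + (B.filter (fun j => ¬ j < a)).card = B.card :=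
    Finset.card_filter_add_card_filter_not (p := fun j => j < a)
  have hEsub : B.filter (fun j => j < a) ⊆ Finset.range a := fun x hx =>
    Finset.mem_range.mpr (Finset.mem_filter.mp hx).2
  have hcard' : (B.filter (fun j => ¬ j < a)).card
      ≤ (Finset.range a \ B.filter (fun j => j < a)).card := by
    rw [Finset.card_sdiff_of_subset hEsub, Finset.card_range]; omega
  obtain ⟨R, hRsub, hRcard⟩ := Finset.exists_subset_card_eq hcard'
  have hJfacts : ∀ j ∈ B.filter (fun j => ¬ j < a), a ≤ j ∧ j ≤ τ := fun j hj =>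
    ⟨not_lt.mp (Finset.mem_filter.mp hj).2, hB j (Finset.mem_filter.mp hj).1⟩
  have hRfacts : ∀ p ∈ R, p < a ∧ p ∉ B.filter (fun j => j < a) := by
    intro p hp
    have := hRsub hp
    rw [Finset.mem_sdiff, Finset.mem_range] at this
    exact this
  have hrowR : ∀ p ∈ R, ∑ j ∈ B.filter (fun j => ¬ j < a), g j * C p (j - a) = 0 := by
    intro p hp
    obtain ⟨hpa, hpE⟩ := hRfacts p hp
    have h := heq p hpa
    rw [← Finset.sum_filter_add_sum_filter_not B (fun j => j < a)] at h
    have hE0 : ∑ j ∈ B.filter (fun j => j < a),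
        g j * (if j < a then (if p = j then (1:K) else 0) else C p (j - a)) = 0 := by
      apply Finset.sum_eq_zero
      intro j hj
      have hja : j < a := (Finset.mem_filter.mp hj).2
      have hpj : p ≠ j := fun h' => hpE (h' ▸ hj)
      simp [hja, hpj]
    have hJeq : ∑ j ∈ B.filter (fun j => ¬ j < a),
        g j * (if j < a then (if p = j then (1:K) else 0) else C p (j - a))
        = ∑ j ∈ B.filter (fun j => ¬ j < a), g j * C p (j - a) := by
      apply Finset.sum_congr rfl
      intro j hj
      have : ¬ j < a := (Finset.mem_filter.mp hj).2
      simp [this]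
    rw [hE0, hJeq] at h
    simpa using h
  set k := (B.filter (fun j => ¬ j < a)).card with hk
  let eR : Fin k ≃o {x // x ∈ R} := R.orderIsoOfFin hRcard
  let eJ : Fin k ≃o {x // x ∈ B.filter (fun j => ¬ j < a)} :=
    (B.filter (fun j => ¬ j < a)).orderIsoOfFin rfl
  let M : Matrix (Fin k) (Fin k) K := Matrix.of fun p q => C ((eR p : ℕ)) ((eJ q : ℕ) - a)
  have hdet : M.det ≠ 0 := by
    apply hC k (fun p => (eR p : ℕ)) (fun q => (eJ q : ℕ) - a)
    · intro p q h
      exact eR.injective (Subtype.ext h)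
    · intro p q h
      apply eJ.injective
      apply Subtype.ext
      have h1 := (hJfacts _ (eJ p).2).1
      have h2 := (hJfacts _ (eJ q).2).1
      simp only at h ⊢
      omega
    · intro p; exact (hRfacts _ (eR p).2).1
    · intro q
      have := hJfacts _ (eJ q).2
      omega
  have hMv : M.mulVec (fun q => g ((eJ q : ℕ))) = 0 := by
    funext p
    have h := hrowR ((eR p : ℕ)) (eR p).2
    have hsum : ∑ j ∈ B.filter (fun j => ¬ j < a), g j * C ((eR p : ℕ)) (j - a)
        = ∑ q : Fin k, g ((eJ q : ℕ)) * C ((eR p : ℕ)) ((eJ q : ℕ) - a) := by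
      rw [← Finset.sum_coe_sort (B.filter (fun j => ¬ j < a))
        (fun j => g j * C ((eR p : ℕ)) (j - a))]
      exact (Equiv.sum_comp eJ.toEquiv _).symm
    simp only [Matrix.mulVec, dotProduct, Pi.zero_apply, Matrix.of_apply, M]
    rw [← h, hsum]
    apply Finset.sum_congr rfl
    intro q _
    ring
  have hv0 : ∀ q : Fin k, g ((eJ q : ℕ)) = 0 := by
    haveI := M.invertibleOfIsUnitDet (Ne.isUnit hdet)
    have h2 := congrArg (fun w => (⅟M).mulVec w) hMv
    simp only [Matrix.mulVec_mulVec, invOf_mul_self, Matrix.one_mulVec,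
      Matrix.mulVec_zero] at h2
    intro q; exact congrFun h2 q
  have hJ0 : ∀ j ∈ B.filter (fun j => ¬ j < a), g j = 0 := by
    intro j hj
    have := hv0 (eJ.symm ⟨j, hj⟩)
    simpa using this
  have hE0 : ∀ j ∈ B.filter (fun j => j < a), g j = 0 := by
    intro e he
    have hea : e < a := (Finset.mem_filter.mp he).2
    have h := heq e hea
    rw [← Finset.sum_filter_add_sum_filter_not B (fun j => j < a)] at h
    have hJz : ∑ j ∈ B.filter (fun j => ¬ j < a),
        g j * (if j < a then (if e = j then (1:K) else 0) else C e (j - a)) = 0 := by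
      apply Finset.sum_eq_zero
      intro j hj
      rw [hJ0 j hj, zero_mul]
    have hEe : ∑ j ∈ B.filter (fun j => j < a),
        g j * (if j < a then (if e = j then (1:K) else 0) else C e (j - a)) = g e := by
      rw [show (∑ j ∈ B.filter (fun j => j < a),
          g j * (if j < a then (if e = j then (1:K) else 0) else C e (j - a)))
          = ∑ j ∈ B.filter (fun j => j < a), (if e = j then g j else 0) from ?_]
      · rw [Finset.sum_ite_eq, if_pos he]
      · apply Finset.sum_congr rfl
        intro j hj
        have hja : j < a := (Finset.mem_filter.mp hj).2
        rw [if_pos hja]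
        by_cases hej : e = j
        · rw [if_pos hej, if_pos hej, mul_one]
        · rw [if_neg hej, if_neg hej, mul_zero]
    rw [hJz, hEe] at h
    simpa using h
  intro j hj
  by_cases hja : j < a
  · exact hE0 j (Finset.mem_filter.mpr ⟨hj, hja⟩)
  · exact hJ0 j (Finset.mem_filter.mpr ⟨hj, hja⟩)

end Aux

/-- Property R2: for every set `A ⊆ [δ : τ+δ]` of column indices with
`|A| = a`, the columns of `H` indexed by `A` are linearly independent over `K`. -/
theorem property_R2 {K : Type*} [Field K] (F : Subfield K) (a b τ : ℕ)
    (ha : 0 < a) (hab : a < b) (hbτ : b ≤ τ)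
    (α : K) (hα : α ∉ F)
    (C : ℕ → ℕ → K) (hCF : ∀ i j, i < a → j < τ + 1 - a → C i j ∈ F)
    (hC : allMinorsInvertible C a (τ + 1 - a))
    (A : Finset ℕ) (hA : ∀ j ∈ A, b - a ≤ j ∧ j ≤ τ + (b - a)) (hcard : A.card = a) :
    LinearIndependent K (fun j : {x // x ∈ A} => fun i : Fin b => Hmat a b τ α C i.val j.val) := by
  classical
  have hδ1 : 1 ≤ b - a := by omega
  rw [Fintype.linearIndependent_iff]
  intro g hsum
  set G : ℕ → K := fun j => if h : j ∈ A then g ⟨j, h⟩ else 0 with hG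
  have hrow : ∀ i, i < b → ∑ j ∈ A, G j * Hmat a b τ α C i j = 0 := by
    intro i hi
    have h0 := congrFun hsum (⟨i, hi⟩ : Fin b)
    simp only [Finset.sum_apply, Pi.smul_apply, smul_eq_mul, Pi.zero_apply] at h0
    calc ∑ j ∈ A, G j * Hmat a b τ α C i j
        = ∑ j ∈ A.attach, G j.1 * Hmat a b τ α C i j.1 := (Finset.sum_attach _ _).symm
      _ = ∑ j ∈ A.attach, g j * Hmat a b τ α C i j.1 := by
          apply Finset.sum_congr rfl
          intro j _
          rw [hG]
          simp only []
          rw [dif_pos j.2]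
      _ = 0 := by rw [← Finset.univ_eq_attach]; exact h0
  set B : Finset ℕ := (A.filter (fun j => j ≤ τ)) ∪ (if τ + (b - a) ∈ A then {0} else ∅)
    with hB
  set G' : ℕ → K := fun j => if j = 0 then G (τ + (b - a)) else G j with hG'
  have h0notA1 : (0:ℕ) ∉ A.filter (fun j => j ≤ τ) := by
    intro h
    have := hA 0 (Finset.mem_filter.mp h).1
    omega
  have hBτ : ∀ j ∈ B, j ≤ τ := by
    intro j hj
    rw [hB] at hj
    rcases Finset.mem_union.mp hj with h | h
    · exact (Finset.mem_filter.mp h).2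
    · by_cases hm : τ + (b - a) ∈ A
      · rw [if_pos hm] at h
        rw [Finset.mem_singleton] at h
        omega
      · rw [if_neg hm] at h
        simp at h
  have hBcard : B.card ≤ a := by
    rw [hB]
    refine le_trans (Finset.card_union_le _ _) ?_
    have hfil : (A.filter (fun j => j ≤ τ)).card + (A.filter (fun j => ¬ j ≤ τ)).card = A.card :=
      Finset.card_filter_add_card_filter_not (p := fun j => j ≤ τ)
    by_cases hm : τ + (b - a) ∈ A
    · rw [if_pos hm]
      have h1 : τ + (b - a) ∈ A.filter (fun j => ¬ j ≤ τ) :=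
        Finset.mem_filter.mpr ⟨hm, by omega⟩
      have h2 : 1 ≤ (A.filter (fun j => ¬ j ≤ τ)).card := Finset.card_pos.mpr ⟨_, h1⟩
      simp only [Finset.card_singleton]
      omega
    · rw [if_neg hm]
      simp only [Finset.card_empty]
      omega
  have hbot : ∀ p, p < a →
      ∑ j ∈ B, G' j * (if j < a then (if p = j then (1:K) else 0) else C p (j - a)) = 0 := by
    intro p hp
    have h := hrow (b - a + p) (by omega)
    rw [← Finset.sum_filter_add_sum_filter_not A (fun j => j ≤ τ)
      (fun j => G j * Hmat a b τ α C (b - a + p) j)] at h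
    have hA1 : ∀ j ∈ A.filter (fun j => j ≤ τ),
        G' j * (if j < a then (if p = j then (1:K) else 0) else C p (j - a))
        = G j * Hmat a b τ α C (b - a + p) j := by
      intro j hj
      obtain ⟨hjA, hjτ⟩ := Finset.mem_filter.mp hj
      have hj0 : j ≠ 0 := by have := hA j hjA; omega
      rw [Hmat_bot_eq a b τ α C ha hab hbτ p j hp, if_pos hjτ, hG']
      simp only [if_neg hj0]
    have hA2 : ∑ j ∈ A.filter (fun j => ¬ j ≤ τ), G j * Hmat a b τ α C (b - a + p) j
        = if τ + (b - a) ∈ A then G (τ + (b - a)) * (if p = 0 then (1:K) else 0) else 0 := by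
      rw [show (∑ j ∈ A.filter (fun j => ¬ j ≤ τ), G j * Hmat a b τ α C (b - a + p) j)
          = ∑ j ∈ A.filter (fun j => ¬ j ≤ τ),
              (if j = τ + (b - a) then G (τ + (b - a)) * (if p = 0 then (1:K) else 0) else 0)
          from ?_]
      · rw [Finset.sum_ite_eq' (A.filter (fun j => ¬ j ≤ τ)) (τ + (b - a))]
        by_cases hm : τ + (b - a) ∈ A
        · rw [if_pos (Finset.mem_filter.mpr ⟨hm, by omega⟩), if_pos hm]
        · rw [if_neg (fun hcon => hm (Finset.mem_filter.mp hcon).1), if_neg hm]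
      · apply Finset.sum_congr rfl
        intro j hj
        obtain ⟨hjA, hjτ⟩ := Finset.mem_filter.mp hj
        rw [Hmat_bot_eq a b τ α C ha hab hbτ p j hp, if_neg hjτ]
        by_cases hje : j = τ + (b - a)
        · rw [if_pos hje, if_pos hje, hje]
        · rw [if_neg hje, if_neg hje, mul_zero]
    have hdisj : Disjoint (A.filter (fun j => j ≤ τ))
        (if τ + (b - a) ∈ A then ({0} : Finset ℕ) else ∅) := by
      by_cases hm : τ + (b - a) ∈ A
      · rw [if_pos hm]
        exact Finset.disjoint_singleton_right.mpr h0notA1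
      · rw [if_neg hm]
        exact Finset.disjoint_empty_right _
    rw [hB, Finset.sum_union hdisj]
    rw [Finset.sum_congr rfl hA1]
    have e2 : ∑ j ∈ (if τ + (b - a) ∈ A then ({0} : Finset ℕ) else ∅),
        G' j * (if j < a then (if p = j then (1:K) else 0) else C p (j - a))
        = if τ + (b - a) ∈ A then G (τ + (b - a)) * (if p = 0 then (1:K) else 0) else 0 := by
      by_cases hm : τ + (b - a) ∈ A
      · rw [if_pos hm, if_pos hm, Finset.sum_singleton, hG']
        simp [ha]
      · rw [if_neg hm, if_neg hm, Finset.sum_empty]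
    rw [e2, ← hA2]
    exact h
  have hBzero : ∀ j ∈ B, G' j = 0 := key_cols a τ C hC B hBτ hBcard G' hbot
  have hGz1 : ∀ j ∈ A, j ≤ τ → G j = 0 := by
    intro j hj hjτ
    have hmem : j ∈ B := by
      rw [hB]
      exact Finset.mem_union_left _ (Finset.mem_filter.mpr ⟨hj, hjτ⟩)
    have hz := hBzero j hmem
    have hj0 : j ≠ 0 := by have := hA j hj; omega
    rw [hG'] at hz
    simpa [hj0] using hz
  have hGz2 : τ + (b - a) ∈ A → G (τ + (b - a)) = 0 := by
    intro hm
    have hmem : (0:ℕ) ∈ B := by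
      rw [hB]
      apply Finset.mem_union_right
      rw [if_pos hm]
      exact Finset.mem_singleton_self 0
    have hz := hBzero 0 hmem
    rw [hG'] at hz
    simpa using hz
  have hGz3 : ∀ j ∈ A, τ < j → j < τ + (b - a) → G j = 0 := by
    intro j hj h1 h2
    have h := hrow (j - τ) (by omega)
    have hs : ∑ j' ∈ A, G j' * Hmat a b τ α C (j - τ) j'
        = G j * Hmat a b τ α C (j - τ) j := by
      apply Finset.sum_eq_single_of_mem j hj
      intro j' hj' hne
      rcases le_or_gt j' τ with hc | hc
      · rw [hGz1 j' hj' hc, zero_mul]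
      · have hup := hA j' hj'
        rcases eq_or_lt_of_le hup.2 with he | hlt
        · rw [he, hGz2 (he ▸ hj'), zero_mul]
        · rw [Hmat_top a b τ α C hab hbτ (j - τ) j' (by omega) hc hup.2,
            if_neg (by omega : ¬ j' = τ + (j - τ)), mul_zero]
    have hHj : Hmat a b τ α C (j - τ) j = 1 := by
      rw [Hmat_top a b τ α C hab hbτ (j - τ) j (by omega) h1 (by omega),
        if_pos (by omega : j = τ + (j - τ))]
    rw [hs, hHj, mul_one] at h
    exact h
  intro j
  have hj := j.2
  have hGj : G j.1 = 0 := by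
    have hr := hA j.1 hj
    rcases le_or_gt j.1 τ with hc | hc
    · exact hGz1 j.1 hj hc
    · rcases eq_or_lt_of_le hr.2 with he | hlt
      · rw [he]
        exact hGz2 (he ▸ hj)
      · exact hGz3 j.1 hj hc hlt
  rw [hG] at hGj
  simp only [] at hGj
  rw [dif_pos hj] at hGj
  exact hGj
end

section
/- Write τ = v·b + ℓ with 0 ≤ ℓ < b (so v ≥ 1). Suppose t satisfies δ ≤ t ≤ (v−1)b, and write t = x·b + θ with 0 ≤ θ < b. If θ ≥ δ, then det(H([0:b−1],[t : t+b−1])) = ε · det(H([δ:b−1], A)) for some ε ∈ {1, −1}, where A = [t : (x+1)b−1] ∪ [(x+1)b+δ : t+b−1] (a set of a column indices); in particular, H([0:b−1],[t : t+b−1]) is invertible over K. -/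
set_option linter.unusedVariables false
set_option linter.unusedTactic false

set_option maxHeartbeats 1000000

lemma Pmat_eq (a b : ℕ) (ha : 0 < a) (hab : a < b) :
    ∀ q p r ℓ i, r < b → ℓ < b → q < p →
      Pmat a (b - a) (p * b + ℓ) i (q * b + r) = if i = r ∧ r < b - a then 1 else 0 := by
  intro q
  induction q with
  | zero =>
    intro p r ℓ i hr hl hqp
    obtain ⟨p', rfl⟩ : ∃ p', p = p' + 1 := ⟨p - 1, by omega⟩
    have hpb : (p' + 1) * b = p' * b + b := by ring
    simp only [Nat.zero_mul, Nat.zero_add]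
    rw [Pmat]
    by_cases hbm : b < (p' + 1) * b + ℓ
    · rw [dif_pos ⟨by omega, by omega⟩]
      by_cases hrd : r < b - a
      · rw [if_pos hrd]; simp [hrd]
      · rw [if_neg hrd, if_pos (show r < (b - a) + a by omega)]; simp [hrd]
    · rw [dif_neg (by omega), dif_neg (by omega)]
  | succ q ih =>
    intro p r ℓ i hr hl hqp
    obtain ⟨p', rfl⟩ : ∃ p', p = p' + 1 := ⟨p - 1, by omega⟩
    have hpb : (p' + 1) * b = p' * b + b := by ring
    have hqb : (q + 1) * b = q * b + b := by ring
    have hp'b : 1 * b ≤ p' * b := mul_le_mul_left (by omega) b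
    rw [Pmat]
    rw [dif_pos ⟨by omega, by omega⟩]
    rw [if_neg (by omega), if_neg (by omega)]
    rw [show (p' + 1) * b + ℓ - (b - a) - a = p' * b + ℓ from by omega,
        show (q + 1) * b + r - (b - a) - a = q * b + r from by omega]
    exact ih p' r ℓ i hr hl (by omega)

section HmatLemmas
variable {K : Type*} [Field K] {a b τ : ℕ} {α : K} {C : ℕ → ℕ → K} {i j : ℕ}

lemma Hmat_top_P (hi : i < b - a) (h1 : b ≤ j) (h2 : j < τ) :
    Hmat a b τ α C i j = (Pmat a (b - a) (τ - b) i (j - b) : K) := by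
  unfold Hmat; rw [if_pos hi, if_neg (by omega), if_pos ⟨h1, h2⟩]

lemma Hmat_top_gap (hi : i < b - a) (h1 : b - a ≤ j) (h2 : j < b) (hbτ : b ≤ τ) :
    Hmat a b τ α C i j = 0 := by
  unfold Hmat
  rw [if_pos hi, if_neg (by omega), if_neg (by omega), if_neg (by omega), if_neg (by omega)]

lemma Hmat_bot_id (hi : ¬ i < b - a) (hj : j < a) :
    Hmat a b τ α C i j = if i = (b - a) + j then 1 else 0 := by
  unfold Hmat; rw [if_neg hi, if_pos hj]

lemma Hmat_bot_C (hi : ¬ i < b - a) (hj1 : a ≤ j) (hj2 : j ≤ τ) :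
    Hmat a b τ α C i j = C (i - (b - a)) (j - a) := by
  unfold Hmat; rw [if_neg hi, if_neg (by omega), if_pos hj2]

end HmatLemmas

lemma det_submatrix_equiv_equiv {m n : Type*} [DecidableEq m] [DecidableEq n]
    [Fintype m] [Fintype n] {R : Type*} [CommRing R]
    (e₁ e₂ : n ≃ m) (A : Matrix m m R) :
    (A.submatrix e₁ e₂).det = ((Equiv.Perm.sign (e₂.trans e₁.symm) : ℤ) : R) * A.det := by
  have h1 : A.submatrix e₁ e₂ = (A.submatrix e₁ e₁).submatrix id (e₂.trans e₁.symm) := by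
    ext i j
    simp [Matrix.submatrix_apply]
  rw [h1, Matrix.det_permute', Matrix.det_submatrix_equiv_self]


/-- case i, `θ ≥ δ`: write `τ = v·b + ℓ`, `0 ≤ ℓ < b`, and let
`δ ≤ t ≤ (v-1)·b` with `t = x·b + θ`, `0 ≤ θ < b`.  If `θ ≥ δ` then
`det H([0:b-1],[t:t+b-1]) = ε · det H([δ:b-1],A)` for some `ε ∈ {1,-1}`, where
`A = [t : (x+1)·b-1] ∪ [(x+1)·b+δ : t+b-1]` is a set of `a` column indices (enumerated in
increasing order); in particular `H([0:b-1],[t:t+b-1])` is invertible over `K`. -/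
theorem property_B2_case_i_large_theta {K : Type*} [Field K] (F : Subfield K) (a b τ : ℕ)
    (ha : 0 < a) (hab : a < b) (hbτ : b ≤ τ)
    (α : K) (hα : α ∉ F)
    (C : ℕ → ℕ → K) (hCF : ∀ i j, i < a → j < τ + 1 - a → C i j ∈ F)
    (hC : allMinorsInvertible C a (τ + 1 - a))
    (v ℓ : ℕ) (hτ : τ = v * b + ℓ) (hℓ : ℓ < b)
    (t x θ : ℕ) (ht1 : b - a ≤ t) (ht2 : t ≤ (v - 1) * b)
    (htxθ : t = x * b + θ) (hθb : θ < b) (hθ : b - a ≤ θ) :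
    (∃ ε : K, (ε = 1 ∨ ε = -1) ∧
      (Matrix.of fun i j : Fin b => Hmat a b τ α C i.val (t + j.val)).det =
        ε * (Matrix.of fun i j : Fin a =>
              Hmat a b τ α C ((b - a) + i.val)
                (if t + j.val < (x + 1) * b then t + j.val
                 else t + j.val + (b - a))).det) ∧
    (Matrix.of fun i j : Fin b => Hmat a b τ α C i.val (t + j.val)).det ≠ 0 := by
  have hδ1 : 1 ≤ b - a := by omega
  -- arithmetic normalization
  have hv2 : 2 ≤ v := by
    by_contra hv
    have hv1 : v - 1 = 0 := by omega
    rw [hv1, Nat.zero_mul] at ht2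
    omega
  obtain ⟨w, rfl⟩ : ∃ w, v = w + 2 := ⟨v - 2, by omega⟩
  have hb2 : (w + 2) * b = w * b + b + b := by ring
  have hb1 : (w + 1) * b = w * b + b := by ring
  have hxb : (x + 1) * b = x * b + b := by ring
  have hτ' : τ = w * b + b + b + ℓ := by rw [hτ, hb2]
  have ht2' : t ≤ w * b + b := by
    have h := ht2
    rw [show w + 2 - 1 = w + 1 from by omega, hb1] at h
    exact h
  have hxw : x < w + 1 := by
    have hxblt : x * b < (w + 1) * b := by rw [hb1]; omega
    exact lt_of_mul_lt_mul_right hxblt (Nat.zero_le b)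
  have hxwb : x * b ≤ w * b := mul_le_mul_left (by omega) b
  -- the two matrices
  set M : Matrix (Fin b) (Fin b) K :=
    Matrix.of fun i j : Fin b => Hmat a b τ α C i.val (t + j.val) with hM
  set N : Matrix (Fin a) (Fin a) K :=
    Matrix.of fun i j : Fin a =>
      Hmat a b τ α C ((b - a) + i.val)
        (if t + j.val < (x + 1) * b then t + j.val
         else t + j.val + (b - a)) with hN
  -- row equiv for step A
  have hba : (b - a) + a = b := by omega
  let e : Fin (b - a) ⊕ Fin a ≃ Fin b := finSumFinEquiv.trans (finCongr hba)
  have he1 : ∀ i : Fin (b - a), ((e (Sum.inl i)) : ℕ) = i.val := by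
    intro i; simp [e]
  have he2 : ∀ i : Fin a, ((e (Sum.inr i)) : ℕ) = (b - a) + i.val := by
    intro i; simp [e]
  -- column map for step A
  let gf : Fin (b - a) ⊕ Fin a → Fin b := fun c =>
    match c with
    | Sum.inl r => ⟨b - θ + r.val, by have := r.isLt; omega⟩
    | Sum.inr c => ⟨if c.val < b - θ then c.val else c.val + (b - a),
        by have := c.isLt; split <;> omega⟩
  have hgi : Function.Injective gf := by
    intro u1 u2 h
    rcases u1 with r1 | c1 <;> rcases u2 with r2 | c2 <;>
      simp only [gf, Fin.mk.injEq] at h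
    · exact congrArg _ (Fin.ext (by have := r1.isLt; have := r2.isLt; omega))
    · exfalso; have := r1.isLt; have := c2.isLt; split at h <;> omega
    · exfalso; have := r2.isLt; have := c1.isLt; split at h <;> omega
    · have := c1.isLt; have := c2.isLt
      split at h <;> split at h <;> exact congrArg _ (Fin.ext (by omega))
  let g : Fin (b - a) ⊕ Fin a ≃ Fin b :=
    Equiv.ofBijective gf ((Fintype.bijective_iff_injective_and_card gf).mpr
      ⟨hgi, by simp [hba]⟩)
  have hg1 : ∀ r : Fin (b - a), ((g (Sum.inl r)) : ℕ) = b - θ + r.val := fun r => rfl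
  have hg2 : ∀ c : Fin a,
      ((g (Sum.inr c)) : ℕ) = if c.val < b - θ then c.val else c.val + (b - a) :=
    fun c => rfl
  -- Pmat evaluation specialized
  have hPmat : ∀ q r i : ℕ, r < b → q < w + 1 →
      ((Pmat a (b - a) (τ - b) i (q * b + r) : ℕ) : K) =
        if i = r ∧ r < b - a then 1 else 0 := by
    intro q r i hr hq
    have hτb : τ - b = (w + 1) * b + ℓ := by rw [hb1]; omega
    rw [hτb, Pmat_eq a b ha hab q (w + 1) r ℓ i hr hℓ hq]
    split_ifs <;> simp
  -- block facts for step A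
  have h11 : (M.submatrix e g).toBlocks₁₁ = 1 := by
    ext i r
    simp only [Matrix.toBlocks₁₁, Matrix.submatrix_apply, Matrix.of_apply]
    rw [hM]
    simp only [Matrix.of_apply]
    rw [he1 i, hg1 r]
    rw [show t + (b - θ + r.val) = x * b + b + r.val from by have := r.isLt; omega]
    rw [Hmat_top_P i.isLt (by omega) (by have := r.isLt; omega)]
    rw [show x * b + b + r.val - b = x * b + r.val from by omega]
    rw [hPmat x r.val i.val (by have := r.isLt; omega) (by omega)]
    rw [Matrix.one_apply]
    by_cases hij : (i : ℕ) = (r : ℕ)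
    · rw [if_pos ⟨hij, r.isLt⟩, if_pos (Fin.ext hij)]
    · rw [if_neg (by tauto), if_neg (fun hh => hij (congrArg Fin.val hh))]
  have h12 : (M.submatrix e g).toBlocks₁₂ = 0 := by
    ext i c
    simp only [Matrix.toBlocks₁₂, Matrix.submatrix_apply, Matrix.of_apply]
    rw [hM]
    simp only [Matrix.of_apply]
    rw [he1 i, hg2 c]
    by_cases hc : (c : ℕ) < b - θ
    · rw [if_pos hc]
      by_cases hx0 : x = 0
      · subst hx0
        rw [Hmat_top_gap i.isLt (by omega) (by omega) hbτ]
        simp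
      · obtain ⟨x', rfl⟩ : ∃ x', x = x' + 1 := ⟨x - 1, by omega⟩
        have hx1' : (x' + 1) * b = x' * b + b := by ring
        rw [Hmat_top_P i.isLt (by omega) (by omega)]
        rw [show t + (c : ℕ) - b = x' * b + (θ + (c : ℕ)) from by omega]
        rw [hPmat x' (θ + c.val) i.val (by omega) (by omega)]
        rw [if_neg (by omega)]
        simp
    · rw [if_neg hc]
      rw [show t + ((c : ℕ) + (b - a)) = x * b + b + (θ + (c : ℕ) + (b - a) - b)
          from by have := c.isLt; omega]
      rw [Hmat_top_P i.isLt (by omega) (by have := c.isLt; omega)]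
      rw [show x * b + b + (θ + (c : ℕ) + (b - a) - b) - b
            = x * b + (θ + (c : ℕ) + (b - a) - b) from by omega]
      rw [hPmat x _ i.val (by have := c.isLt; omega) (by omega)]
      rw [if_neg (by omega)]
      simp
  have h22 : (M.submatrix e g).toBlocks₂₂ = N := by
    ext i c
    simp only [Matrix.toBlocks₂₂, Matrix.submatrix_apply, Matrix.of_apply]
    rw [hM, hN]
    simp only [Matrix.of_apply]
    rw [he2 i, hg2 c]
    congr 1
    split_ifs <;> omega
  -- step A determinant identity
  have hdetA : N.det = ((Equiv.Perm.sign (g.trans e.symm) : ℤ) : K) * M.det := by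
    have h := det_submatrix_equiv_equiv e g M
    rw [← h]
    conv_rhs => rw [← Matrix.fromBlocks_toBlocks (M.submatrix e g)]
    rw [h11, h12, h22, Matrix.det_fromBlocks_zero₁₂, Matrix.det_one, one_mul]
  -- step B : N is invertible
  have hat : (a - t) + (a - (a - t)) = a := by omega
  let e2 : Fin (a - t) ⊕ Fin (a - (a - t)) ≃ Fin a := finSumFinEquiv.trans (finCongr hat)
  have he2l : ∀ j : Fin (a - t), ((e2 (Sum.inl j)) : ℕ) = j.val := by
    intro j; simp [e2]
  have he2r : ∀ j : Fin (a - (a - t)), ((e2 (Sum.inr j)) : ℕ) = (a - t) + j.val := by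
    intro j; simp [e2]
  let ρf : Fin (a - t) ⊕ Fin (a - (a - t)) → Fin a := fun u =>
    match u with
    | Sum.inl i => ⟨t + i.val, by have := i.isLt; omega⟩
    | Sum.inr i => ⟨i.val, by have := i.isLt; omega⟩
  have hρi : Function.Injective ρf := by
    intro u1 u2 h
    rcases u1 with i1 | i1 <;> rcases u2 with i2 | i2 <;>
      simp only [ρf, Fin.mk.injEq] at h
    · exact congrArg _ (Fin.ext (by omega))
    · exfalso; have := i1.isLt; have := i2.isLt; omega
    · exfalso; have := i1.isLt; have := i2.isLt; omega
    · exact congrArg _ (Fin.ext h)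
  let ρg : Fin (a - t) ⊕ Fin (a - (a - t)) ≃ Fin a :=
    Equiv.ofBijective ρf ((Fintype.bijective_iff_injective_and_card ρf).mpr
      ⟨hρi, by simp [hat]⟩)
  have hρ1 : ∀ i : Fin (a - t), ((ρg (Sum.inl i)) : ℕ) = t + i.val := fun _ => rfl
  have hρ2 : ∀ i : Fin (a - (a - t)), ((ρg (Sum.inr i)) : ℕ) = i.val := fun _ => rfl
  have b11 : (N.submatrix ρg e2).toBlocks₁₁ = 1 := by
    ext i j
    simp only [Matrix.toBlocks₁₁, Matrix.submatrix_apply, Matrix.of_apply]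
    rw [hN]
    simp only [Matrix.of_apply]
    rw [hρ1 i, he2l j]
    rw [if_pos (by have := j.isLt; omega)]
    rw [Hmat_bot_id (by omega) (by have := j.isLt; omega)]
    rw [Matrix.one_apply]
    by_cases hij : (i : ℕ) = (j : ℕ)
    · rw [if_pos (by omega), if_pos (Fin.ext hij)]
    · rw [if_neg (by omega), if_neg (fun hh => hij (congrArg Fin.val hh))]
  have b21 : (N.submatrix ρg e2).toBlocks₂₁ = 0 := by
    ext i j
    simp only [Matrix.toBlocks₂₁, Matrix.submatrix_apply, Matrix.of_apply]
    rw [hN]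
    simp only [Matrix.of_apply]
    rw [hρ2 i, he2l j]
    rw [if_pos (by have := j.isLt; omega)]
    rw [Hmat_bot_id (by omega) (by have := j.isLt; omega)]
    rw [if_neg (by have := i.isLt; have := j.isLt; omega)]
    simp
  have b22 : (N.submatrix ρg e2).toBlocks₂₂ =
      Matrix.of (fun (i j : Fin (a - (a - t))) =>
        C i.val ((if t + ((a - t) + j.val) < (x + 1) * b then t + ((a - t) + j.val)
                  else t + ((a - t) + j.val) + (b - a)) - a)) := by
    ext i j
    simp only [Matrix.toBlocks₂₂, Matrix.submatrix_apply, Matrix.of_apply]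
    rw [hN]
    simp only [Matrix.of_apply]
    rw [hρ2 i, he2r j]
    rw [Hmat_bot_C (by omega)
      (by split <;> (have := j.isLt; omega))
      (by split <;> (have := j.isLt; omega))]
    rw [show (b - a) + i.val - (b - a) = i.val from by omega]
  have hDdet : (Matrix.of (fun (i j : Fin (a - (a - t))) =>
      C i.val ((if t + ((a - t) + j.val) < (x + 1) * b then t + ((a - t) + j.val)
                else t + ((a - t) + j.val) + (b - a)) - a))).det ≠ 0 := by
    apply hC (a - (a - t)) (fun i => i.val)
      (fun j => (if t + ((a - t) + j.val) < (x + 1) * b then t + ((a - t) + j.val)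
                 else t + ((a - t) + j.val) + (b - a)) - a)
    · exact fun i1 i2 h => Fin.ext h
    · intro j1 j2 h
      beta_reduce at h
      have h1 := j1.isLt; have h2 := j2.isLt
      apply Fin.ext
      split_ifs at h <;> omega
    · intro i
      beta_reduce
      have := i.isLt; omega
    · intro j
      beta_reduce
      have := j.isLt
      split <;> omega
  have hdetB : ((Equiv.Perm.sign (e2.trans ρg.symm) : ℤ) : K) * N.det ≠ 0 := by
    rw [← det_submatrix_equiv_equiv ρg e2 N]
    rw [← Matrix.fromBlocks_toBlocks (N.submatrix ρg e2), b11, b21, b22,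
      Matrix.det_fromBlocks_zero₂₁, Matrix.det_one, one_mul]
    exact hDdet
  have hNdet : N.det ≠ 0 := by
    intro h
    rw [h, mul_zero] at hdetB
    exact hdetB rfl
  -- conclude
  have hsgn : ((Equiv.Perm.sign (g.trans e.symm) : ℤ) : K) = 1 ∨
      ((Equiv.Perm.sign (g.trans e.symm) : ℤ) : K) = -1 := by
    rcases Int.units_eq_one_or (Equiv.Perm.sign (g.trans e.symm)) with h | h <;>
      rw [h] <;> simp
  have hsq : ((Equiv.Perm.sign (g.trans e.symm) : ℤ) : K) *
      ((Equiv.Perm.sign (g.trans e.symm) : ℤ) : K) = 1 := by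
    rcases hsgn with h | h <;> rw [h] <;> norm_num
  have hMN : M.det = ((Equiv.Perm.sign (g.trans e.symm) : ℤ) : K) * N.det := by
    rw [hdetA, ← mul_assoc, hsq, one_mul]
  refine ⟨⟨((Equiv.Perm.sign (g.trans e.symm) : ℤ) : K), hsgn, hMN⟩, ?_⟩
  rw [hMN]
  exact mul_ne_zero (by rcases hsgn with h | h <;> rw [h] <;> norm_num) hNdet
end

section
/- There exist ε ∈ {1, −1} and z ∈ F such that det(H([0:b−1],[τ−a : τ+δ−1])) = ε·α·det(H([δ:b−1],[τ−a : τ−1])) + z; consequently, since every a×a submatrix of H([δ:b−1],[0:τ]) is invertible and α ∉ F, the b×b submatrix H([0:b−1],[τ−a : τ+δ−1]) is invertible over K. -/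
set_option linter.unusedVariables false
set_option maxHeartbeats 2000000

lemma det_submatrix_sign {K : Type*} [Field K] {m n : Type*} [DecidableEq m] [Fintype m]
    [DecidableEq n] [Fintype n] (N : Matrix m m K) (e₁ e₂ : n ≃ m) :
    ∃ ε : K, (ε = 1 ∨ ε = -1) ∧ N.det = ε * (N.submatrix e₁ e₂).det := by
  have h : N.submatrix e₁ e₂ = (N.submatrix e₁ e₁).submatrix id (e₂.trans e₁.symm) := by
    ext i j; simp
  refine ⟨((Equiv.Perm.sign (e₂.trans e₁.symm) : ℤ) : K), ?_, ?_⟩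
  · rcases Int.units_eq_one_or (Equiv.Perm.sign (e₂.trans e₁.symm)) with hs | hs <;>
      rw [hs] <;> simp
  · rw [h, Matrix.det_permute', Matrix.det_submatrix_equiv_self]
    rcases Int.units_eq_one_or (Equiv.Perm.sign (e₂.trans e₁.symm)) with hs | hs <;>
      rw [hs] <;> push_cast <;> ring

lemma det_mem_subfield {K : Type*} [Field K] (F : Subfield K) {n : Type*} [DecidableEq n]
    [Fintype n] (M : Matrix n n K) (h : ∀ i j, M i j ∈ F) : M.det ∈ F := by
  rw [Matrix.det_apply']
  refine Subfield.sum_mem _ fun σ _ => mul_mem ?_ (Subfield.prod_mem _ fun i _ => h _ _)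
  rcases Int.units_eq_one_or (Equiv.Perm.sign σ) with hs | hs <;> rw [hs] <;>
    simp [Subfield.one_mem, Subfield.neg_mem]

/-- case iv, `t = τ - a`: there exist `ε ∈ {1,-1}` and `z ∈ F` with
`det H([0:b-1],[τ-a : τ+δ-1]) = ε·α·det H([δ:b-1],[τ-a : τ-1]) + z`; consequently the
`b×b` submatrix `H([0:b-1],[τ-a : τ+δ-1])` is invertible over `K`. -/
theorem property_B2_case_iv {K : Type*} [Field K] (F : Subfield K) (a b τ : ℕ)
    (ha : 0 < a) (hab : a < b) (hbτ : b ≤ τ)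
    (α : K) (hα : α ∉ F)
    (C : ℕ → ℕ → K) (hCF : ∀ i j, i < a → j < τ + 1 - a → C i j ∈ F)
    (hC : allMinorsInvertible C a (τ + 1 - a)) :
    (∃ ε z : K, (ε = 1 ∨ ε = -1) ∧ z ∈ F ∧
      (Matrix.of fun i j : Fin b => Hmat a b τ α C i.val (τ - a + j.val)).det =
        ε * α * (Matrix.of fun i j : Fin a =>
              Hmat a b τ α C ((b - a) + i.val) (τ - a + j.val)).det + z) ∧
    (Matrix.of fun i j : Fin b => Hmat a b τ α C i.val (τ - a + j.val)).det ≠ 0 := by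

  -- the two matrices of the statement
  set M : Matrix (Fin b) (Fin b) K :=
    Matrix.of fun i j : Fin b => Hmat a b τ α C i.val (τ - a + j.val) with hM
  set A : Matrix (Fin a) (Fin a) K :=
    Matrix.of fun i j : Fin a => Hmat a b τ α C ((b - a) + i.val) (τ - a + j.val) with hA
  -- row and column reindexings for the first block decomposition
  let e₁ : Fin (b - a - 1) ⊕ Fin (a + 1) ≃ Fin b :=
    { toFun := fun x => match x with
        | .inl k => ⟨(k : ℕ) + 1, by have := k.isLt; omega⟩
        | .inr r => ⟨if (r : ℕ) = 0 then 0 else b - a + (r : ℕ) - 1,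
            by have := r.isLt; split <;> omega⟩
      invFun := fun i =>
        if h : (i : ℕ) = 0 ∨ ¬ (i : ℕ) < b - a then
          .inr ⟨if (i : ℕ) = 0 then 0 else (i : ℕ) - (b - a) + 1,
            by have := i.isLt; split <;> omega⟩
        else .inl ⟨(i : ℕ) - 1, by have := i.isLt; omega⟩
      left_inv := by
        rintro (k | r)
        · have hk := k.isLt
          dsimp only
          rw [dif_neg (by simp; omega)]
          simp
        · have hr := r.isLt
          dsimp only
          rw [dif_pos (by split <;> omega)]
          congr 1
          apply Fin.ext
          simp only [Fin.val_mk]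
          split <;> split <;> omega
      right_inv := by
        intro i
        have hi := i.isLt
        dsimp only
        by_cases h : (i : ℕ) = 0 ∨ ¬ (i : ℕ) < b - a
        · rw [dif_pos h]
          apply Fin.ext
          simp only [Fin.val_mk]
          split <;> split <;> omega
        · rw [dif_neg h]
          apply Fin.ext
          simp only [Fin.val_mk]
          omega }
  let e₂ : Fin (b - a - 1) ⊕ Fin (a + 1) ≃ Fin b :=
    (Equiv.sumComm _ _).trans ((finSumFinEquiv).trans (finCongr (by omega)))
  have he₁l : ∀ k : Fin (b - a - 1), ((e₁ (Sum.inl k)) : ℕ) = (k : ℕ) + 1 := fun k => rfl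
  have he₁r : ∀ r : Fin (a + 1),
      ((e₁ (Sum.inr r)) : ℕ) = if (r : ℕ) = 0 then 0 else b - a + (r : ℕ) - 1 := fun r => rfl
  have he₂l : ∀ k : Fin (b - a - 1), ((e₂ (Sum.inl k)) : ℕ) = a + 1 + (k : ℕ) := by
    intro k; simp [e₂]
  have he₂r : ∀ r : Fin (a + 1), ((e₂ (Sum.inr r)) : ℕ) = (r : ℕ) := by
    intro r; simp [e₂]
  set N := M.submatrix e₁ e₂ with hN
  have h11 : N.toBlocks₁₁ = 1 := by
    ext k k'
    have hk := k.isLt; have hk' := k'.isLt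
    simp only [Matrix.toBlocks₁₁, Matrix.of_apply, Matrix.submatrix_apply, hN, hM,
      Matrix.one_apply, Fin.ext_iff]
    rw [he₁l, he₂l]
    unfold Hmat
    split_ifs <;> first | omega | rfl
  have h21 : N.toBlocks₂₁ = 0 := by
    ext r k'
    have hr := r.isLt; have hk' := k'.isLt
    simp only [Matrix.toBlocks₂₁, Matrix.of_apply, Matrix.submatrix_apply, hN, hM,
      Matrix.zero_apply]
    rw [he₁r, he₂l]
    unfold Hmat
    split_ifs <;> first | omega | rfl
  have hdetN : N.det = N.toBlocks₂₂.det := by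
    conv_lhs => rw [← Matrix.fromBlocks_toBlocks N, h11, h21]
    rw [Matrix.det_fromBlocks_zero₂₁, Matrix.det_one, one_mul]
  set M'' := N.toBlocks₂₂ with hM''def
  have hM'' : ∀ (r j : Fin (a + 1)), M'' r j =
      Hmat a b τ α C (if (r : ℕ) = 0 then 0 else b - a + (r : ℕ) - 1) (τ - a + (j : ℕ)) := by
    intro r j
    simp only [hM''def, Matrix.toBlocks₂₂, Matrix.of_apply, Matrix.submatrix_apply, hN, hM]
    rw [he₁r, he₂r]
  have hlast : M'' 0 (Fin.last a) = α := by
    rw [hM'']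
    simp only [Fin.val_zero, Fin.val_last, if_pos rfl]
    unfold Hmat
    split_ifs <;> first | omega | rfl
  have hminor : M''.submatrix Fin.succ (Fin.last a).succAbove = A := by
    ext r j
    have hr := r.isLt; have hj := j.isLt
    simp only [Matrix.submatrix_apply, Fin.succAbove_last, hA, Matrix.of_apply]
    rw [hM'']
    simp only [Fin.val_succ, Fin.coe_castSucc]
    rw [if_neg (by omega)]
    congr 2 <;> omega
  -- the row expansion
  have hexp : M''.det =
      (∑ j : Fin a, (-1 : K) ^ (j : ℕ) * M'' 0 j.castSucc *
        (M''.submatrix Fin.succ (j.castSucc).succAbove).det) + (-1 : K) ^ a * α * A.det := by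
    rw [Matrix.det_succ_row_zero, Fin.sum_univ_castSucc]
    rw [hlast, hminor, Fin.val_last]
    simp only [Fin.coe_castSucc]
  set z' : K := ∑ j : Fin a, (-1 : K) ^ (j : ℕ) * M'' 0 j.castSucc *
      (M''.submatrix Fin.succ (j.castSucc).succAbove).det with hz'def
  have hz' : z' ∈ F := by
    refine Subfield.sum_mem _ fun j _ => ?_
    have hj := j.isLt
    refine mul_mem (mul_mem (pow_mem (neg_mem (Subfield.one_mem F)) _) ?_)
      (det_mem_subfield F _ fun r' j' => ?_)
    · rw [hM'']
      simp only [Fin.val_zero, Fin.coe_castSucc, if_pos rfl]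
      unfold Hmat
      split_ifs <;> first | omega | exact Subfield.zero_mem F | exact natCast_mem F _
    · have hr' := r'.isLt
      have hv := ((j.castSucc).succAbove j').isLt
      simp only [Matrix.submatrix_apply]
      rw [hM'']
      simp only [Fin.val_succ]
      rw [if_neg (by omega)]
      unfold Hmat
      split_ifs <;>
        first
          | omega
          | exact Subfield.zero_mem F
          | exact Subfield.one_mem F
          | exact hCF _ _ (by omega) (by omega)
  obtain ⟨ε₁, hε₁, hdetM⟩ := det_submatrix_sign M e₁ e₂
  rw [← hN, hdetN, hexp] at hdetM
  -- A has entries in F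
  have hAF : ∀ i j, A i j ∈ F := by
    intro i j
    have hi := i.isLt; have hj := j.isLt
    simp only [hA, Matrix.of_apply]
    unfold Hmat
    split_ifs <;>
      first
        | omega
        | exact Subfield.zero_mem F
        | exact Subfield.one_mem F
        | exact hCF _ _ (by omega) (by omega)
  have hAmem : A.det ∈ F := det_mem_subfield F A hAF
  -- A is invertible, via the second block decomposition
  have hAne : A.det ≠ 0 := by
    have hts : (a - (2 * a - τ)) + (2 * a - τ) = a := by omega
    have hst : (2 * a - τ) + (a - (2 * a - τ)) = a := by omega
    let eA : Fin (a - (2 * a - τ)) ⊕ Fin (2 * a - τ) ≃ Fin a := finSumFinEquiv.trans (finCongr hts)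
    let eB : Fin (a - (2 * a - τ)) ⊕ Fin (2 * a - τ) ≃ Fin a :=
      (Equiv.sumComm _ _).trans (finSumFinEquiv.trans (finCongr hst))
    have heAl : ∀ i : Fin (a - (2 * a - τ)), ((eA (Sum.inl i)) : ℕ) = (i : ℕ) := by intro i; simp [eA]
    have heAr : ∀ i : Fin (2 * a - τ), ((eA (Sum.inr i)) : ℕ) = (a - (2 * a - τ)) + (i : ℕ) := by intro i; simp [eA]
    have heBl : ∀ j : Fin (a - (2 * a - τ)), ((eB (Sum.inl j)) : ℕ) = (2 * a - τ) + (j : ℕ) := by intro j; simp [eB]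
    have heBr : ∀ j : Fin (2 * a - τ), ((eB (Sum.inr j)) : ℕ) = (j : ℕ) := by intro j; simp [eB]
    obtain ⟨ε₂, hε₂, hdA⟩ := det_submatrix_sign A eA eB
    set NA := A.submatrix eA eB with hNA
    have h12 : NA.toBlocks₁₂ = 0 := by
      ext i j
      have hi := i.isLt; have hj := j.isLt
      simp only [Matrix.toBlocks₁₂, Matrix.of_apply, Matrix.submatrix_apply, hNA, hA,
        Matrix.zero_apply]
      rw [heAl, heBr]
      unfold Hmat
      split_ifs <;> first | omega | rfl
    have h22 : NA.toBlocks₂₂ = 1 := by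
      ext i j
      have hi := i.isLt; have hj := j.isLt
      simp only [Matrix.toBlocks₂₂, Matrix.of_apply, Matrix.submatrix_apply, hNA, hA,
        Matrix.one_apply, Fin.ext_iff]
      rw [heAr, heBr]
      unfold Hmat
      split_ifs <;> first | omega | rfl
    have h11A : NA.toBlocks₁₁ =
        Matrix.of fun i j : Fin (a - (2 * a - τ)) => C ((i : ℕ)) (τ + (2 * a - τ) - 2 * a + (j : ℕ)) := by
      ext i j
      have hi := i.isLt; have hj := j.isLt
      simp only [Matrix.toBlocks₁₁, Matrix.of_apply, Matrix.submatrix_apply, hNA, hA]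
      rw [heAl, heBl]
      unfold Hmat
      split_ifs <;> first | omega | (congr 1 <;> omega)
    have hdetNA : NA.det = (Matrix.of fun i j : Fin (a - (2 * a - τ)) =>
        C ((i : ℕ)) (τ + (2 * a - τ) - 2 * a + (j : ℕ))).det := by
      conv_lhs => rw [← Matrix.fromBlocks_toBlocks NA, h12, h22, h11A]
      rw [Matrix.det_fromBlocks_zero₁₂, Matrix.det_one, mul_one]
    have hCdet : (Matrix.of fun i j : Fin (a - (2 * a - τ)) =>
        C ((i : ℕ)) (τ + (2 * a - τ) - 2 * a + (j : ℕ))).det ≠ 0 := by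
      refine hC (a - (2 * a - τ)) (fun i => (i : ℕ)) (fun j => τ + (2 * a - τ) - 2 * a + (j : ℕ)) ?_ ?_ ?_ ?_
      · intro x y hxy; exact Fin.ext hxy
      · intro x y hxy; apply Fin.ext; dsimp only at hxy; omega
      · intro i; have := i.isLt; omega
      · intro j; have := j.isLt; omega
    rw [hdA, hdetNA]
    exact mul_ne_zero (by rcases hε₂ with rfl | rfl <;> simp) hCdet
  -- assemble
  have hεα : ε₁ ≠ 0 := by rcases hε₁ with rfl | rfl <;> simp
  have hεmem : ε₁ ∈ F := by
    rcases hε₁ with rfl | rfl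
    · exact Subfield.one_mem F
    · exact Subfield.neg_mem F (Subfield.one_mem F)
  have hpow : ((-1 : K) ^ a = 1 ∨ (-1 : K) ^ a = -1) := neg_one_pow_eq_or K a
  have hεz : ε₁ * (-1 : K) ^ a = 1 ∨ ε₁ * (-1 : K) ^ a = -1 := by
    rcases hε₁ with rfl | rfl <;> rcases hpow with h | h <;> rw [h] <;> norm_num
  have hmain : M.det = (ε₁ * (-1 : K) ^ a) * α * A.det + ε₁ * z' := by
    rw [hdetM]; ring
  refine ⟨⟨ε₁ * (-1 : K) ^ a, ε₁ * z', hεz, mul_mem hεmem hz', hmain⟩, ?_⟩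
  -- nonvanishing
  intro h0
  have hpne : (ε₁ * (-1 : K) ^ a) * A.det ≠ 0 := by
    refine mul_ne_zero (mul_ne_zero hεα ?_) hAne
    rcases hpow with h | h <;> rw [h] <;> simp
  have hαeq : α = (-(ε₁ * z')) / ((ε₁ * (-1 : K) ^ a) * A.det) := by
    rw [eq_div_iff hpne]
    linear_combination h0 - hmain
  apply hα
  rw [hαeq]
  refine Subfield.div_mem F (Subfield.neg_mem F (mul_mem hεmem hz')) ?_
  exact mul_mem (mul_mem hεmem (by rcases hpow with h | h <;> rw [h] <;>
    first
      | exact Subfield.one_mem F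
      | exact Subfield.neg_mem F (Subfield.one_mem F))) hAmem
end

section
/- Let F be a field, a a positive integer, m a nonnegative integer, and C an a×m matrix over F every square submatrix of which is invertible. Then every set of a columns of the a×(a+m) block matrix [I_a | C] is linearly independent over F; equivalently, [I_a | C] is the parity-check matrix of an [a+m, m] MDS code. -/
open Matrix Finset

/-- let `F` be a field, `a > 0`, `m ≥ 0`, and `C` an `a×m` matrix over `F`
every square submatrix of which is invertible.  Then every set of `a` columns of the
`a×(a+m)` block matrix `[I_a | C]` is linearly independent over `F` (i.e. `[I_a | C]` is
the parity-check matrix of an `[a+m, m]` MDS code). -/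
theorem identity_append_superregular_is_MDS {F : Type*} [Field F] (a m : ℕ) (ha : 0 < a)
    (C : Matrix (Fin a) (Fin m) F)
    (hC : ∀ (k : ℕ) (I : Fin k → Fin a) (J : Fin k → Fin m),
      Function.Injective I → Function.Injective J → (C.submatrix I J).det ≠ 0) :
    ∀ s : Finset (Fin a ⊕ Fin m), s.card = a →
      LinearIndependent F (fun j : {x // x ∈ s} =>
        fun i : Fin a => Matrix.fromCols (1 : Matrix (Fin a) (Fin a) F) C i j.val) := by
  intro s hs
  rw [Fintype.linearIndependent_iff]
  intro g hg j0
  -- extend g to all of Fin a ⊕ Fin m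
  classical
  set G : Fin a ⊕ Fin m → F := fun x => if h : x ∈ s then g ⟨x, h⟩ else 0 with hG
  -- row equations
  have hrow : ∀ i : Fin a,
      (∑ x ∈ s.toLeft, G (Sum.inl x) * (1 : Matrix (Fin a) (Fin a) F) i x)
        + ∑ y ∈ s.toRight, G (Sum.inr y) * C i y = 0 := by
    intro i
    have h1 := congrFun hg i
    simp only [Finset.sum_apply, Pi.smul_apply, smul_eq_mul, Pi.zero_apply] at h1
    have h2 : ∑ x ∈ s, G x * Matrix.fromCols (1 : Matrix (Fin a) (Fin a) F) C i x = 0 := by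
      rw [← h1, ← Finset.sum_coe_sort s
        (fun x => G x * Matrix.fromCols (1 : Matrix (Fin a) (Fin a) F) C i x)]
      refine Finset.sum_congr rfl fun j _ => ?_
      simp [hG, j.2]
    rw [← Finset.toLeft_disjSum_toRight (u := s), Finset.sum_disjSum] at h2
    simpa using h2
  -- the complement of the left part
  set T : Finset (Fin a) := s.toLeftᶜ with hT
  have hcard : s.toLeft.card + s.toRight.card = a := by
    rw [Finset.card_toLeft_add_card_toRight, hs]
  set k : ℕ := s.toRight.card with hk
  have hTcard : T.card = k := by
    rw [hT, Finset.card_compl, Fintype.card_fin]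
    omega
  set I : Fin k → Fin a := fun p => ((T.orderIsoOfFin hTcard p : {x // x ∈ T}) : Fin a) with hI
  set J : Fin k → Fin m := fun q =>
    ((s.toRight.orderIsoOfFin rfl q : {x // x ∈ s.toRight}) : Fin m) with hJ
  have hIinj : Function.Injective I :=
    Subtype.coe_injective.comp (T.orderIsoOfFin hTcard).injective
  have hJinj : Function.Injective J :=
    Subtype.coe_injective.comp (s.toRight.orderIsoOfFin rfl).injective
  have hdet := hC k I J hIinj hJinj
  set d : Fin k → F := fun q => G (Sum.inr (J q)) with hd
  have hmv : (C.submatrix I J).mulVec d = 0 := by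
    funext p
    have hIp : I p ∉ s.toLeft :=
      Finset.mem_compl.mp ((T.orderIsoOfFin hTcard p).2)
    have h3 := hrow (I p)
    have h4 : ∑ x ∈ s.toLeft, G (Sum.inl x) * (1 : Matrix (Fin a) (Fin a) F) (I p) x = 0 := by
      refine Finset.sum_eq_zero fun x hx => ?_
      have : I p ≠ x := fun h => hIp (h ▸ hx)
      simp [Matrix.one_apply, this]
    rw [h4, zero_add] at h3
    have h5 : ∑ y ∈ s.toRight, G (Sum.inr y) * C (I p) y
        = ∑ q : Fin k, G (Sum.inr (J q)) * C (I p) (J q) := by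
      rw [← Finset.sum_coe_sort s.toRight (fun y => G (Sum.inr y) * C (I p) y)]
      exact (Equiv.sum_comp (s.toRight.orderIsoOfFin rfl).toEquiv
        (fun y => G (Sum.inr (y : Fin m)) * C (I p) (y : Fin m))).symm
    rw [h5] at h3
    simp only [Matrix.mulVec, dotProduct, Matrix.submatrix_apply, Pi.zero_apply]
    rw [← h3]
    exact Finset.sum_congr rfl fun q _ => mul_comm _ _
  have hd0 : d = 0 := Matrix.eq_zero_of_mulVec_eq_zero hdet hmv
  have hR : ∀ y ∈ s.toRight, G (Sum.inr y) = 0 := by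
    intro y hy
    have h6 : J ((s.toRight.orderIsoOfFin rfl).symm ⟨y, hy⟩) = y := by
      show ((s.toRight.orderIsoOfFin rfl) ((s.toRight.orderIsoOfFin rfl).symm ⟨y, hy⟩) : Fin m) = y
      rw [OrderIso.apply_symm_apply]
    have h7 := congrFun hd0 ((s.toRight.orderIsoOfFin rfl).symm ⟨y, hy⟩)
    simp only [hd, Pi.zero_apply] at h7
    rwa [h6] at h7
  have hL : ∀ x ∈ s.toLeft, G (Sum.inl x) = 0 := by
    intro x hx
    have h3 := hrow x
    have h5 : ∑ y ∈ s.toRight, G (Sum.inr y) * C x y = 0 :=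
      Finset.sum_eq_zero fun y hy => by rw [hR y hy, zero_mul]
    have h4 : ∑ x' ∈ s.toLeft, G (Sum.inl x') * (1 : Matrix (Fin a) (Fin a) F) x x'
        = G (Sum.inl x) := by
      rw [Finset.sum_eq_single x]
      · simp [Matrix.one_apply]
      · intro b hb hbx
        simp [Matrix.one_apply, (Ne.symm hbx)]
      · exact fun h => absurd hx h
    rw [h4, h5, add_zero] at h3
    exact h3
  rcases j0 with ⟨x | y, hj⟩
  · have := hL x (Finset.mem_toLeft.2 hj)
    simpa [hG, hj] using this
  · have := hR y (Finset.mem_toRight.2 hj)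
    simpa [hG, hj] using this
end

section
/- For every prime power q and all integers a, τ with 1 ≤ a ≤ τ ≤ q, there exists an a×(τ+1−a) matrix C over the finite field F_q with q elements such that every square submatrix of C is invertible. -/
open Polynomial in
/-- A square matrix whose columns are either Cauchy columns `(x i - w)⁻¹` (with the
nodes `w` pairwise distinct and distinct from the pairwise distinct `x i`'s) or a
single all-ones column has nonzero determinant. -/
lemma extCauchy_det_ne_zero {F : Type*} [Field F] {k : ℕ} (x : Fin k → F)
    (y : Fin k → Option F) (hx : Function.Injective x) (hy : Function.Injective y)
    (hxy : ∀ i j, some (x i) ≠ y j) (M : Matrix (Fin k) (Fin k) F)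
    (hM : ∀ i j, M i j = (y j).elim 1 (fun w => (x i - w)⁻¹)) :
    M.det ≠ 0 := by
  classical
  intro hdet
  obtain ⟨v, hv, hMv⟩ := Matrix.exists_mulVec_eq_zero_iff.mpr hdet
  have hk : 0 < k := by
    rcases Nat.eq_zero_or_pos k with h | h
    · subst h
      exact absurd (_root_.funext (fun i : Fin 0 => i.elim0) : v = 0) hv
    · exact h
  set f : Fin k → F[X] := fun l => (y l).elim 1 (fun w => X - C w) with hfdef
  set N : Fin k → F[X] := fun j => ∏ l ∈ Finset.univ.erase j, f l with hNdef
  set P : F[X] := ∑ j, C (v j) * N j with hPdef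
  -- each factor evaluates to something nonzero at each x i
  have hfx : ∀ (l : Fin k) (i : Fin k), (f l).eval (x i) ≠ 0 := by
    intro l i
    cases hyl : y l with
    | none => simp [hfdef, hyl]
    | some w =>
      have : x i - w ≠ 0 := by
        intro h
        exact hxy i l (by rw [hyl, sub_eq_zero.mp h])
      simpa [hfdef, hyl, sub_eq_zero] using this
  -- key: M i j * (f j).eval (x i) = 1
  have hMf : ∀ i j, M i j * (f j).eval (x i) = 1 := by
    intro i j
    cases hyj : y j with
    | none => simp [hM, hfdef, hyj]
    | some w =>
      have hne : x i - w ≠ 0 := by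
        intro h; exact hxy i j (by rw [hyj, sub_eq_zero.mp h])
      simp [hM, hfdef, hyj, inv_mul_cancel₀ hne]
  have hPx : ∀ i, P.eval (x i) = 0 := by
    intro i
    have hNx : ∀ j, (N j).eval (x i) = M i j * (∏ l, f l).eval (x i) := by
      intro j
      have hsplit : (∏ l, f l) = f j * N j := by
        rw [hNdef]; exact (Finset.mul_prod_erase Finset.univ f (Finset.mem_univ j)).symm
      calc (N j).eval (x i)
          = (M i j * (f j).eval (x i)) * (N j).eval (x i) := by rw [hMf i j, one_mul]
        _ = M i j * (f j * N j).eval (x i) := by rw [eval_mul]; ring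
        _ = M i j * (∏ l, f l).eval (x i) := by rw [← hsplit]
    have h0 : M.mulVec v i = 0 := by rw [hMv]; rfl
    calc P.eval (x i) = ∑ j, v j * (N j).eval (x i) := by
          simp [hPdef, eval_finset_sum]
      _ = (∑ j, M i j * v j) * (∏ l, f l).eval (x i) := by
          rw [Finset.sum_mul]
          refine Finset.sum_congr rfl fun j _ => ?_
          rw [hNx j]; ring
      _ = 0 := by
          have : ∑ j, M i j * v j = 0 := h0
          rw [this, zero_mul]
  have hdegf : ∀ l, (f l).natDegree ≤ 1 := by
    intro l
    cases hyl : y l with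
    | none => simp [hfdef, hyl]
    | some w => simp [hfdef, hyl, natDegree_X_sub_C]
  have hdegN : ∀ j, (N j).natDegree ≤ k - 1 := by
    intro j
    refine le_trans (natDegree_prod_le _ _) ?_
    calc ∑ l ∈ Finset.univ.erase j, (f l).natDegree
        ≤ ∑ _l ∈ Finset.univ.erase j, 1 :=
          Finset.sum_le_sum fun l _ => hdegf l
      _ = (Finset.univ.erase j).card := by simp
      _ = k - 1 := by
          rw [Finset.card_erase_of_mem (Finset.mem_univ j)]
          simp
  have hdegP : P.natDegree < k := by
    have : P.natDegree ≤ k - 1 := by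
      refine natDegree_sum_le_of_forall_le _ _ fun j _ => ?_
      refine le_trans (natDegree_mul_le) ?_
      simpa using hdegN j
    omega
  have hP0 : P = 0 :=
    eq_zero_of_natDegree_lt_card_of_eval_eq_zero P hx hPx (by simpa using hdegP)
  -- nonvanishing of N j at relevant points / nonzeroness
  have hN0 : ∀ j, N j ≠ 0 := by
    intro j
    refine Finset.prod_ne_zero_iff.mpr fun l _ => ?_
    cases hyl : y l with
    | none => simp [hfdef, hyl]
    | some w => simp [hfdef, hyl, X_sub_C_ne_zero]
  have hreg : ∀ j w, y j = some w → v j = 0 := by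
    intro j w hyj
    have hev : P.eval w = 0 := by rw [hP0]; simp
    have hsum : P.eval w = v j * (N j).eval w := by
      rw [hPdef, eval_finset_sum]
      rw [Finset.sum_eq_single j]
      · simp
      · intro j' _ hj'
        have hjmem : j ∈ Finset.univ.erase j' := by
          simp [Finset.mem_erase, (Ne.symm hj' : j ≠ j')]
        have : (N j').eval w = 0 := by
          rw [hNdef, eval_prod]
          refine Finset.prod_eq_zero hjmem ?_
          simp [hfdef, hyj]
        simp [this]
      · simp
    have hNw : (N j).eval w ≠ 0 := by
      rw [hNdef, eval_prod]
      refine Finset.prod_ne_zero_iff.mpr fun l hl => ?_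
      cases hyl : y l with
      | none => simp [hfdef, hyl]
      | some w' =>
        have : w ≠ w' := by
          intro h
          exact (Finset.mem_erase.mp hl).1 (hy (by rw [hyl, hyj, h]))
        simpa [hfdef, hyl, sub_eq_zero] using this
    have h0 : v j * (N j).eval w = 0 := by rw [← hsum]; exact hev
    exact (mul_eq_zero.mp h0).resolve_right hNw
  have hall : ∀ j, v j = 0 := by
    intro j
    cases hyj : y j with
    | some w => exact hreg j w hyj
    | none =>
      have hPj : P = C (v j) * N j := by
        rw [hPdef, Finset.sum_eq_single j]
        · intro j' _ hj'
          cases hyj' : y j' with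
          | none => exact absurd (hy (hyj'.trans hyj.symm)) hj'
          | some w => rw [hreg j' w hyj']; simp
        · simp
      have := hPj ▸ hP0
      rcases mul_eq_zero.mp this with h | h
      · simpa using h
      · exact absurd h (hN0 j)
  exact hv (funext fun i => hall i)

/-- for every prime power `q` and all integers `a, τ` with `1 ≤ a ≤ τ ≤ q`,
there exists an `a×(τ+1-a)` matrix `C` over the finite field with `q` elements such that
every square submatrix of `C` is invertible. -/
theorem exists_superregular_matrix (q a τ : ℕ) (hq : IsPrimePow q)
    (ha : 1 ≤ a) (haτ : a ≤ τ) (hτq : τ ≤ q)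
    (F : Type*) [Field F] [Fintype F] (hF : Fintype.card F = q) :
    ∃ C : Matrix (Fin a) (Fin (τ + 1 - a)) F,
      ∀ (k : ℕ) (I : Fin k → Fin a) (J : Fin k → Fin (τ + 1 - a)),
        Function.Injective I → Function.Injective J → (C.submatrix I J).det ≠ 0 := by
  classical
  obtain ⟨e⟩ := Function.Embedding.nonempty_of_card_le
    (show Fintype.card (Fin τ) ≤ Fintype.card F by simp [hF, hτq])
  set m := τ + 1 - a with hm
  have hma : a + (m - 1) = τ := by omega
  set x : Fin a → F := fun i => e ⟨i, lt_of_lt_of_le i.isLt haτ⟩ with hxdef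
  set y : Fin m → Option F := fun j =>
    if h : (j : ℕ) + 1 < m then some (e ⟨a + j, by omega⟩) else none with hydef
  refine ⟨Matrix.of fun i j => (y j).elim 1 (fun w => (x i - w)⁻¹), ?_⟩
  intro k I J hI hJ
  have hxinj : Function.Injective x := by
    intro i i' h
    have h2 := congrArg Fin.val (e.injective h)
    simp only at h2
    exact Fin.ext h2
  have hyinj : Function.Injective y := by
    intro j j' h
    by_cases hj : (j : ℕ) + 1 < m <;> by_cases hj' : (j' : ℕ) + 1 < m
    · rw [hydef] at h
      simp only [dif_pos hj, dif_pos hj', Option.some.injEq] at h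
      have h2 := congrArg Fin.val (e.injective h)
      simp only at h2
      exact Fin.ext (by omega)
    · rw [hydef] at h; simp only [dif_pos hj, dif_neg hj'] at h; exact absurd h (by simp)
    · rw [hydef] at h; simp only [dif_neg hj, dif_pos hj'] at h; exact absurd h (by simp)
    · have hjl : (j : ℕ) < m := j.isLt
      have hjl' : (j' : ℕ) < m := j'.isLt
      exact Fin.ext (by omega)
  have hxy : ∀ (i : Fin a) (j : Fin m), some (x i) ≠ y j := by
    intro i j heq
    by_cases hj : (j : ℕ) + 1 < m
    · rw [hydef, hxdef] at heq
      simp only [dif_pos hj, Option.some.injEq] at heq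
      have h2 := congrArg Fin.val (e.injective heq)
      simp only at h2
      have hi : (i : ℕ) < a := i.isLt
      omega
    · rw [hydef] at heq
      simp only [dif_neg hj] at heq
      exact absurd heq (by simp)
  exact extCauchy_det_ne_zero (x ∘ I) (y ∘ J) (hxinj.comp hI) (hyinj.comp hJ)
    (fun i j => hxy (I i) (J j)) _ (fun i j => rfl)
end
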